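/- arXiv:1812.11360 — 3 statements merged into one kernel-verified Lean document; each statement's English description precedes it below -/
import Mathlib

section
/- For every integer n ≥ 1 and every integer l with 2 ≤ l ≤ 2n+1, the generalized Petersen graph P(2n+1,1) contains exactly 2n+1 cycles of length 2l, and it contains exactly 2 cycles of length 2n+1. -/
open SimpleGraph

/-- The generalized Petersen graph `P(m,1)`: vertices `(false, i) = uᵢ` (outer) and
`(true, i) = vᵢ` (inner); edges `uᵢuᵢ₊₁`, `vᵢvᵢ₊₁` and spokes `uᵢvᵢ`, indices mod `m`. -/
def GP (m : ℕ) : SimpleGraph (Bool × ZMod m) :=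
  SimpleGraph.fromRel (fun a b =>
    (a.1 = b.1 ∧ b.2 = a.2 + 1) ∨ (a.1 ≠ b.1 ∧ a.2 = b.2))

namespace GPAux

variable {m : ℕ}

lemma one_ne_zero' (hm : 3 ≤ m) : (1 : ZMod m) ≠ 0 := by
  have : ((1:ℕ) : ZMod m) ≠ 0 := by
    rw [Ne, ZMod.natCast_eq_zero_iff]
    intro h; have := Nat.le_of_dvd one_pos h; omega
  simpa using this

lemma two_ne_zero' (hm : 3 ≤ m) : (2 : ZMod m) ≠ 0 := by
  have : ((2:ℕ) : ZMod m) ≠ 0 := by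
    rw [Ne, ZMod.natCast_eq_zero_iff]
    intro h; have := Nat.le_of_dvd two_pos h; omega
  simpa using this

lemma natCast_inj_lt {t t' : ℕ} (ht : t < m) (ht' : t' < m)
    (h : (t : ZMod m) = (t' : ZMod m)) : t = t' := by
  have h1 : (t : ZMod m).val = t := ZMod.val_cast_of_lt ht
  have h2 : (t' : ZMod m).val = t' := ZMod.val_cast_of_lt ht'
  rw [h] at h1
  omega

lemma gp_adj (hm : 3 ≤ m) (x y : Bool × ZMod m) :
    (GP m).Adj x y ↔
      (x.1 = y.1 ∧ (y.2 = x.2 + 1 ∨ x.2 = y.2 + 1)) ∨ (x.1 ≠ y.1 ∧ x.2 = y.2) := by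
  rw [GP, fromRel_adj]
  constructor
  · rintro ⟨hne, h | h⟩
    · rcases h with ⟨h1, h2⟩ | ⟨h1, h2⟩
      · exact Or.inl ⟨h1, Or.inl h2⟩
      · exact Or.inr ⟨h1, h2⟩
    · rcases h with ⟨h1, h2⟩ | ⟨h1, h2⟩
      · exact Or.inl ⟨h1.symm, Or.inr h2⟩
      · exact Or.inr ⟨fun e => h1 e.symm, h2.symm⟩
  · rintro (⟨h1, h2 | h2⟩ | ⟨h1, h2⟩)
    · refine ⟨?_, Or.inl (Or.inl ⟨h1, h2⟩)⟩
      intro e; rw [e] at h2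
      exact one_ne_zero' hm (by linear_combination -h2)
    · refine ⟨?_, Or.inr (Or.inl ⟨h1.symm, h2⟩)⟩
      intro e; rw [e] at h2
      exact one_ne_zero' hm (by linear_combination -h2)
    · exact ⟨fun e => h1 (congrArg Prod.fst e), Or.inl (Or.inr ⟨h1, h2⟩)⟩



lemma gp_adj_ne_level {x y : Bool × ZMod m} (h : (GP m).Adj x y) (hne : x.1 ≠ y.1) :
    x.2 = y.2 := by
  rw [GP, fromRel_adj] at h
  rcases h.2 with (⟨h1, _⟩ | ⟨_, h2⟩) | (⟨h1, _⟩ | ⟨_, h2⟩)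
  · exact absurd h1 hne
  · exact h2
  · exact absurd h1.symm hne
  · exact h2.symm

variable (m) in
/-- The outer (β = false) or inner (β = true) cycle as a subgraph. -/
def Lvl (β : Bool) : (GP m).Subgraph where
  verts := {x | x.1 = β}
  Adj x y := (GP m).Adj x y ∧ x.1 = β ∧ y.1 = β
  adj_sub h := h.1
  edge_vert h := h.2.1
  symm := ⟨fun x y h => ⟨h.1.symm, h.2.2, h.2.1⟩⟩

/-- The cycle through the spokes at `i₀` and `i₀ + k`, using the arcs
`i₀, i₀+1, …, i₀+k` on both levels. -/
def Cyc (i₀ : ZMod m) (k : ℕ) : (GP m).Subgraph where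
  verts := {x | ∃ t ≤ k, x.2 = i₀ + t}
  Adj x y := (GP m).Adj x y ∧
    ((x.1 = y.1 ∧ ∃ t < k, (x.2 = i₀ + t ∧ y.2 = x.2 + 1) ∨ (y.2 = i₀ + t ∧ x.2 = y.2 + 1)) ∨
      (x.1 ≠ y.1 ∧ (x.2 = i₀ ∨ x.2 = i₀ + (k : ZMod m))))
  adj_sub h := h.1
  edge_vert {x y} h := by
    rcases h.2 with ⟨_, t, ht, ⟨h1, _⟩ | ⟨h1, h2⟩⟩ | ⟨_, h1 | h1⟩
    · exact ⟨t, le_of_lt ht, h1⟩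
    · exact ⟨t + 1, ht, by rw [h2, h1]; push_cast; ring⟩
    · exact ⟨0, Nat.zero_le _, by simpa using h1⟩
    · exact ⟨k, le_refl _, h1⟩
  symm := ⟨fun x y h => by
    refine ⟨h.1.symm, ?_⟩
    rcases h.2 with ⟨h1, t, ht, h2⟩ | ⟨h1, h2⟩
    · exact Or.inl ⟨h1.symm, t, ht, h2.symm⟩
    · refine Or.inr ⟨fun e => h1 e.symm, ?_⟩
      rw [← gp_adj_ne_level h.1 h1]; exact h2⟩

lemma lvl_verts (β : Bool) : (Lvl m β).verts = {x | x.1 = β} := rfl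

lemma lvl_adj (hm : 3 ≤ m) {β : Bool} {x y : Bool × ZMod m} :
    (Lvl m β).Adj x y ↔ x.1 = β ∧ y.1 = β ∧ (y.2 = x.2 + 1 ∨ x.2 = y.2 + 1) := by
  constructor
  · rintro ⟨hadj, hx, hy⟩
    refine ⟨hx, hy, ?_⟩
    rcases (gp_adj hm x y).1 hadj with ⟨_, h⟩ | ⟨h, _⟩
    · exact h
    · exact absurd (hx.trans hy.symm) h
  · rintro ⟨hx, hy, h⟩
    exact ⟨(gp_adj hm x y).2 (Or.inl ⟨hx.trans hy.symm, h⟩), hx, hy⟩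

lemma cyc_verts (i₀ : ZMod m) (k : ℕ) :
    (Cyc i₀ k).verts = {x | ∃ t ≤ k, x.2 = i₀ + t} := rfl

lemma cyc_adj (hm : 3 ≤ m) {i₀ : ZMod m} {k : ℕ} {x y : Bool × ZMod m} :
    (Cyc i₀ k).Adj x y ↔
      ((x.1 = y.1 ∧ ∃ t < k, (x.2 = i₀ + t ∧ y.2 = x.2 + 1) ∨ (y.2 = i₀ + t ∧ x.2 = y.2 + 1)) ∨
        (x.1 ≠ y.1 ∧ x.2 = y.2 ∧ (x.2 = i₀ ∨ x.2 = i₀ + (k : ZMod m)))) := by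
  constructor
  · rintro ⟨hadj, h | ⟨h1, h2⟩⟩
    · exact Or.inl h
    · exact Or.inr ⟨h1, gp_adj_ne_level hadj h1, h2⟩
  · rintro (⟨h1, t, ht, h2⟩ | ⟨h1, h2, h3⟩)
    · refine ⟨(gp_adj hm x y).2 (Or.inl ⟨h1, ?_⟩), Or.inl ⟨h1, t, ht, h2⟩⟩
      rcases h2 with ⟨_, h⟩ | ⟨_, h⟩
      · exact Or.inl h
      · exact Or.inr h
    · exact ⟨(gp_adj hm x y).2 (Or.inr ⟨h1, h2⟩), Or.inr ⟨h1, h3⟩⟩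

section P3
variable {m : ℕ}

lemma adj_reachable {H : (GP m).Subgraph} {x y : Bool × ZMod m} (h : H.Adj x y) :
    H.coe.Reachable ⟨x, H.edge_vert h⟩ ⟨y, H.edge_vert h.symm⟩ :=
  SimpleGraph.Adj.reachable (by rw [Subgraph.coe_adj]; exact h)

lemma reach_of_adj {H : (GP m).Subgraph} {x y : Bool × ZMod m}
    (hx : x ∈ H.verts) (hy : y ∈ H.verts) (h : H.Adj x y) :
    H.coe.Reachable ⟨x, hx⟩ ⟨y, hy⟩ := adj_reachable h

lemma natCast_val_self {i : ZMod m} (hm : 3 ≤ m) : ((i.val : ℕ) : ZMod m) = i := by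
  haveI : NeZero m := ⟨by omega⟩
  exact ZMod.natCast_rightInverse i

lemma lvl_verts_ncard (β : Bool) : (Lvl m β).verts.ncard = m := by
  have : (Lvl m β).verts = (fun i : ZMod m => (β, i)) '' Set.univ := by
    ext x
    constructor
    · intro hx
      exact ⟨x.2, trivial, by ext <;> simp [hx.symm]⟩
    · rintro ⟨i, -, rfl⟩
      rfl
  rw [this, Set.ncard_image_of_injective _ (fun a b h => (Prod.ext_iff.1 h).2),
    Set.ncard_univ, Nat.card_zmod]

lemma lvl_deg (hm : 3 ≤ m) (β : Bool) :
    ∀ x ∈ (Lvl m β).verts, ((Lvl m β).neighborSet x).ncard = 2 := by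
  intro x hx
  have hx1 : x.1 = β := hx
  have : (Lvl m β).neighborSet x = {(β, x.2 + 1), (β, x.2 - 1)} := by
    ext y
    simp only [Subgraph.mem_neighborSet, lvl_adj hm, Set.mem_insert_iff,
      Set.mem_singleton_iff]
    constructor
    · rintro ⟨-, hy1, h | h⟩
      · left; ext
        · exact hy1
        · exact h
      · right; ext
        · exact hy1
        · simp only; linear_combination -h
    · rintro (rfl | rfl)
      · exact ⟨hx1, rfl, Or.inl rfl⟩
      · exact ⟨hx1, rfl, Or.inr (by simp only; ring)⟩
  rw [this]
  refine Set.ncard_pair fun h => ?_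
  have h2 := (Prod.ext_iff.1 h).2
  simp only at h2
  exact two_ne_zero' hm (by linear_combination h2)

lemma lvl_connected (hm : 3 ≤ m) (β : Bool) : (Lvl m β).Connected := by
  rw [Subgraph.connected_iff]
  have hmem : ∀ i : ZMod m, (β, i) ∈ (Lvl m β).verts := fun i => rfl
  refine ⟨?_, ⟨(β, 0), hmem 0⟩⟩
  have key : ∀ t : ℕ, (Lvl m β).coe.Reachable ⟨(β, 0), hmem 0⟩ ⟨(β, (t : ZMod m)), hmem _⟩ := by
    intro t
    induction t with
    | zero =>
      have : (⟨(β, ((0:ℕ):ZMod m)), hmem _⟩ : (Lvl m β).verts) = ⟨(β, 0), hmem 0⟩ := by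
        apply Subtype.ext; norm_num
      rw [this]
    | succ t ih =>
      refine ih.trans (reach_of_adj _ _ ?_)
      rw [lvl_adj hm]
      exact ⟨rfl, rfl, Or.inl (by push_cast; ring)⟩
  have key2 : ∀ x (hx : x ∈ (Lvl m β).verts),
      (Lvl m β).coe.Reachable ⟨(β, 0), hmem 0⟩ ⟨x, hx⟩ := by
    intro x hx
    have hx1 : x.1 = β := hx
    have : (⟨x, hx⟩ : (Lvl m β).verts) = ⟨(β, ((x.2.val : ℕ) : ZMod m)), hmem _⟩ := by
      apply Subtype.ext
      ext
      · exact hx1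
      · exact (natCast_val_self hm).symm
    rw [this]
    exact key x.2.val
  constructor
  intro x y
  exact ((key2 x.1 x.2).symm.trans (key2 y.1 y.2))

end P3

section P4
variable {m : ℕ} {i₀ : ZMod m} {k : ℕ}

lemma bool_ne_iff {a b : Bool} : a ≠ b ↔ b = !a := by cases a <;> cases b <;> simp

lemma add_nat_inj {t t' : ℕ} (ht : t < m) (ht' : t' < m) (i₀ : ZMod m) :
    i₀ + (t : ZMod m) = i₀ + (t' : ZMod m) ↔ t = t' := by
  constructor
  · intro h
    exact natCast_inj_lt ht ht' (by linear_combination h)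
  · rintro rfl; rfl

lemma cyc_verts_ncard (hkm : k < m) : (Cyc i₀ k).verts.ncard = 2 * (k + 1) := by
  have himg : (Cyc i₀ k).verts =
      (fun p : Bool × ℕ => (p.1, i₀ + (p.2 : ZMod m))) ''
        ↑((Finset.univ : Finset Bool) ×ˢ Finset.Iic k) := by
    ext x
    constructor
    · rintro ⟨t, htk, hx2⟩
      refine ⟨(x.1, t), by simp [htk], ?_⟩
      ext
      · rfl
      · exact hx2.symm
    · rintro ⟨p, hp, rfl⟩
      simp only [Finset.coe_product, Set.mem_prod, Finset.mem_coe, Finset.mem_Iic] at hp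
      exact ⟨p.2, hp.2, rfl⟩
  rw [himg, Set.ncard_image_of_injOn, Set.ncard_coe_finset, Finset.card_product,
    Finset.card_univ, Nat.card_Iic]
  · simp [mul_comm]
  · rintro ⟨a, t⟩ hp ⟨a', t'⟩ hq he
    simp only [Finset.coe_product, Set.mem_prod, Finset.mem_coe, Finset.mem_Iic] at hp hq
    obtain ⟨h1, h2⟩ := Prod.ext_iff.1 he
    simp only at h1 h2
    rw [add_nat_inj (lt_of_le_of_lt hp.2 hkm) (lt_of_le_of_lt hq.2 hkm)] at h2
    rw [h1, h2]

lemma cyc_adj_at (hm : 3 ≤ m) (hkm : k < m) {t : ℕ} (htk : t ≤ k) {x y : Bool × ZMod m}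
    (hx2 : x.2 = i₀ + t) :
    (Cyc i₀ k).Adj x y ↔
      (x.1 = y.1 ∧ ((t < k ∧ y.2 = x.2 + 1) ∨ (1 ≤ t ∧ y.2 = i₀ + ((t - 1 : ℕ) : ZMod m)))) ∨
        (x.1 ≠ y.1 ∧ y.2 = x.2 ∧ (t = 0 ∨ t = k)) := by
  have htm : t < m := lt_of_le_of_lt htk hkm
  rw [cyc_adj hm]
  constructor
  · rintro (⟨h1, t', ht', ⟨e1, e2⟩ | ⟨e1, e2⟩⟩ | ⟨h1, h2, h3 | h3⟩)
    · have : t' = t := by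
        rw [hx2] at e1
        exact ((add_nat_inj htm (lt_trans ht' hkm) i₀).1 e1).symm
      exact Or.inl ⟨h1, Or.inl ⟨this ▸ ht', e2⟩⟩
    · have he : i₀ + ((t' + 1 : ℕ) : ZMod m) = i₀ + (t : ZMod m) := by
        push_cast
        rw [← hx2, e2, e1]; ring
      have ht1 : t' + 1 = t := (add_nat_inj (by omega) htm i₀).1 he
      refine Or.inl ⟨h1, Or.inr ⟨by omega, ?_⟩⟩
      have h6 : t' = t - 1 := by omega
      rw [e1, h6]
    · refine Or.inr ⟨h1, h2.symm, Or.inl ?_⟩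
      have : i₀ + ((0 : ℕ) : ZMod m) = i₀ + (t : ZMod m) := by
        rw [← hx2, h3]; simp
      exact ((add_nat_inj (by omega) htm i₀).1 this).symm
    · refine Or.inr ⟨h1, h2.symm, Or.inr ?_⟩
      have : i₀ + ((k : ℕ) : ZMod m) = i₀ + (t : ZMod m) := by rw [← hx2, h3]
      exact ((add_nat_inj hkm htm i₀).1 this).symm
  · rintro (⟨h1, ⟨h2, h3⟩ | ⟨h2, h3⟩⟩ | ⟨h1, h2, h3⟩)
    · exact Or.inl ⟨h1, t, h2, Or.inl ⟨hx2, h3⟩⟩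
    · refine Or.inl ⟨h1, t - 1, by omega, Or.inr ⟨h3, ?_⟩⟩
      rw [h3, hx2]
      have h5 : ((t - 1 : ℕ) : ZMod m) = (t : ZMod m) - 1 := by
        rw [Nat.cast_sub h2, Nat.cast_one]
      rw [h5]; ring
    · rcases h3 with rfl | rfl
      · exact Or.inr ⟨h1, h2.symm, Or.inl (by rw [hx2]; simp)⟩
      · exact Or.inr ⟨h1, h2.symm, Or.inr hx2⟩

lemma cyc_deg (hm : 3 ≤ m) (hk1 : 1 ≤ k) (hkm : k < m) :
    ∀ x ∈ (Cyc i₀ k).verts, ((Cyc i₀ k).neighborSet x).ncard = 2 := by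
  intro x hx
  obtain ⟨t, htk, hx2⟩ := hx
  have htm : t < m := lt_of_le_of_lt htk hkm
  by_cases ht0 : t = 0
  · subst ht0
    have : (Cyc i₀ k).neighborSet x = {(x.1, x.2 + 1), (!x.1, x.2)} := by
      ext y
      simp only [Subgraph.mem_neighborSet, cyc_adj_at hm hkm htk hx2, Set.mem_insert_iff,
        Set.mem_singleton_iff, Prod.ext_iff]
      constructor
      · rintro (⟨h1, ⟨-, h3⟩ | ⟨h2, -⟩⟩ | ⟨h1, h2, -⟩)
        · exact Or.inl ⟨h1.symm, h3⟩
        · omega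
        · exact Or.inr ⟨bool_ne_iff.1 h1, h2⟩
      · rintro (⟨h1, h2⟩ | ⟨h1, h2⟩)
        · exact Or.inl ⟨h1.symm, Or.inl ⟨hk1, h2⟩⟩
        · exact Or.inr ⟨bool_ne_iff.2 h1, h2, Or.inl trivial⟩

    rw [this]
    refine Set.ncard_pair fun h => ?_
    have := (Prod.ext_iff.1 h).1
    simp at this
  · by_cases htk' : t = k
    · have : (Cyc i₀ k).neighborSet x = {(x.1, i₀ + ((t - 1 : ℕ) : ZMod m)), (!x.1, x.2)} := by
        ext y
        simp only [Subgraph.mem_neighborSet, cyc_adj_at hm hkm htk hx2, Set.mem_insert_iff,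
          Set.mem_singleton_iff, Prod.ext_iff]
        constructor
        · rintro (⟨h1, ⟨h2, -⟩ | ⟨-, h3⟩⟩ | ⟨h1, h2, -⟩)
          · omega
          · exact Or.inl ⟨h1.symm, h3⟩
          · exact Or.inr ⟨bool_ne_iff.1 h1, h2⟩
        · rintro (⟨h1, h2⟩ | ⟨h1, h2⟩)
          · exact Or.inl ⟨h1.symm, Or.inr ⟨by omega, h2⟩⟩
          · exact Or.inr ⟨bool_ne_iff.2 h1, h2, Or.inr htk'⟩
      rw [this]
      refine Set.ncard_pair fun h => ?_
      have := (Prod.ext_iff.1 h).1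
      simp at this
    · have : (Cyc i₀ k).neighborSet x = {(x.1, x.2 + 1), (x.1, i₀ + ((t - 1 : ℕ) : ZMod m))} := by
        ext y
        simp only [Subgraph.mem_neighborSet, cyc_adj_at hm hkm htk hx2, Set.mem_insert_iff,
          Set.mem_singleton_iff, Prod.ext_iff]
        constructor
        · rintro (⟨h1, ⟨-, h3⟩ | ⟨-, h3⟩⟩ | ⟨-, -, h3 | h3⟩)
          · exact Or.inl ⟨h1.symm, h3⟩
          · exact Or.inr ⟨h1.symm, h3⟩
          · omega
          · omega
        · rintro (⟨h1, h2⟩ | ⟨h1, h2⟩)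
          · exact Or.inl ⟨h1.symm, Or.inl ⟨by omega, h2⟩⟩
          · exact Or.inl ⟨h1.symm, Or.inr ⟨by omega, h2⟩⟩
      rw [this]
      refine Set.ncard_pair fun h => ?_
      have h2 := (Prod.ext_iff.1 h).2
      simp only at h2
      rw [hx2] at h2
      have : i₀ + ((t + 1 : ℕ) : ZMod m) = i₀ + ((t - 1 : ℕ) : ZMod m) := by
        push_cast; rw [← h2]; ring
      have := (add_nat_inj (by omega) (by omega) i₀).1 this
      omega

end P4

section P5
variable {m : ℕ} {i₀ : ZMod m} {k : ℕ}

lemma cyc_mem (β : Bool) {t : ℕ} (htk : t ≤ k) : (β, i₀ + (t : ZMod m)) ∈ (Cyc i₀ k).verts :=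
  ⟨t, htk, rfl⟩

lemma cyc_connected (hm : 3 ≤ m) (hk1 : 1 ≤ k) (hkm : k < m) : (Cyc i₀ k).Connected := by
  rw [Subgraph.connected_iff]
  have hmem0 : ((false, i₀) : Bool × ZMod m) ∈ (Cyc i₀ k).verts := ⟨0, Nat.zero_le _, by simp⟩
  refine ⟨?_, ⟨_, hmem0⟩⟩
  have spoke : (Cyc i₀ k).Adj (false, i₀) (true, i₀) := by
    rw [cyc_adj hm]
    exact Or.inr ⟨by simp, rfl, Or.inl rfl⟩
  have reach : ∀ (β : Bool) (t : ℕ) (htk : t ≤ k),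
      (Cyc i₀ k).coe.Reachable ⟨(false, i₀), hmem0⟩ ⟨(β, i₀ + (t : ZMod m)), cyc_mem β htk⟩ := by
    intro β t
    induction t with
    | zero =>
      intro _
      have base : (Cyc i₀ k).coe.Reachable ⟨(false, i₀), hmem0⟩
          ⟨(β, i₀), by exact ⟨0, Nat.zero_le _, by simp⟩⟩ := by
        cases β
        · rfl
        · exact reach_of_adj _ _ spoke
      have : (⟨(β, i₀ + ((0 : ℕ) : ZMod m)), cyc_mem β (Nat.zero_le _)⟩ :
          (Cyc i₀ k).verts) = ⟨(β, i₀), by exact ⟨0, Nat.zero_le _, by simp⟩⟩ := by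
        apply Subtype.ext; norm_num
      rw [this]
      exact base
    | succ t ih =>
      intro hsk
      refine (ih (by omega)).trans (reach_of_adj _ _ ?_)
      rw [cyc_adj hm]
      refine Or.inl ⟨rfl, t, by omega, Or.inl ⟨rfl, by push_cast; ring⟩⟩
  constructor
  intro x y
  have hx' : ∀ (z : (Cyc i₀ k).verts), (Cyc i₀ k).coe.Reachable ⟨(false, i₀), hmem0⟩ z := by
    rintro ⟨z, t, htk, hz2⟩
    have : (⟨z, ⟨t, htk, hz2⟩⟩ : (Cyc i₀ k).verts) = ⟨(z.1, i₀ + (t : ZMod m)), cyc_mem z.1 htk⟩ := by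
      apply Subtype.ext
      ext
      · rfl
      · exact hz2
    rw [this]
    exact reach z.1 t htk
  exact (hx' x).symm.trans (hx' y)

lemma cyc_a_char (hm : 3 ≤ m) {j : ZMod m} :
    (Cyc i₀ k).Adj (false, j) (false, j + 1) ↔ ∃ t < k, j = i₀ + (t : ZMod m) := by
  rw [cyc_adj hm]
  constructor
  · rintro (⟨-, t, ht, ⟨h1, -⟩ | ⟨h1, h2⟩⟩ | ⟨h1, -⟩)
    · exact ⟨t, ht, h1⟩
    · exfalso
      simp only at h2
      exact two_ne_zero' hm (by linear_combination -h2)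
    · exact absurd rfl h1
  · rintro ⟨t, ht, h1⟩
    exact Or.inl ⟨rfl, t, ht, Or.inl ⟨h1, rfl⟩⟩

lemma neg_one_eq (hm : 3 ≤ m) : ((m - 1 : ℕ) : ZMod m) = -1 := by
  have h1 : ((m - 1 : ℕ) : ZMod m) = (m : ℕ) - 1 := by
    rw [Nat.cast_sub (by omega), Nat.cast_one]
  rw [h1, ZMod.natCast_self]; ring

lemma cyc_injective (hm : 3 ≤ m) (hk1 : 1 ≤ k) (hkm : k < m) {i i' : ZMod m}
    (h : Cyc i k = Cyc i' k) : i = i' := by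
  have hA : ∀ j : ZMod m, (∃ t < k, j = i + (t : ZMod m)) ↔ (∃ t < k, j = i' + (t : ZMod m)) := by
    intro j
    rw [← cyc_a_char hm, ← cyc_a_char hm, h]
  obtain ⟨t₀, ht₀, he⟩ := (hA i').2 ⟨0, hk1, by simp⟩
  rcases Nat.eq_zero_or_pos t₀ with h0 | h1
  · rw [h0] at he
    simpa using he.symm
  · exfalso
    have hmem : ∃ t < k, i' - 1 = i + (t : ZMod m) :=
      ⟨t₀ - 1, by omega, by
        rw [he, Nat.cast_sub h1, Nat.cast_one]; ring⟩
    obtain ⟨t, ht, he2⟩ := (hA (i' - 1)).1 hmem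
    have : i' + ((m - 1 : ℕ) : ZMod m) = i' + (t : ZMod m) := by
      rw [neg_one_eq hm, ← he2]; ring
    have := (add_nat_inj (by omega) (by omega) i').1 this
    omega

lemma lvl_ne : Lvl m false ≠ Lvl m true := by
  intro h
  have : ((false, 0) : Bool × ZMod m) ∈ (Lvl m true).verts := by rw [← h]; rfl
  simpa [lvl_verts] using this

lemma cyc_ne_lvl (hm : 3 ≤ m) (hk1 : 1 ≤ k) (hkm : k < m) (β : Bool) :
    Cyc i₀ k ≠ Lvl m β := by
  intro h
  have : (Cyc i₀ k).Adj (false, i₀) (true, i₀) := by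
    rw [cyc_adj hm]
    exact Or.inr ⟨by simp, rfl, Or.inl rfl⟩
  rw [h] at this
  simpa using this.2.1.trans this.2.2.symm

end P5

section P6
variable {m : ℕ} (H : (GP m).Subgraph)

/-- outer edge indicator -/
def AA (i : ZMod m) : Prop := H.Adj (false, i) (false, i + 1)
/-- inner edge indicator -/
def BB (i : ZMod m) : Prop := H.Adj (true, i) (true, i + 1)
/-- spoke indicator -/
def SS (i : ZMod m) : Prop := H.Adj (false, i) (true, i)

lemma adj_classify (hm : 3 ≤ m) {x y : Bool × ZMod m} :
    H.Adj x y ↔ ∃ i : ZMod m,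
      (x = (false, i) ∧ y = (false, i + 1) ∧ AA H i) ∨
      (x = (false, i + 1) ∧ y = (false, i) ∧ AA H i) ∨
      (x = (true, i) ∧ y = (true, i + 1) ∧ BB H i) ∨
      (x = (true, i + 1) ∧ y = (true, i) ∧ BB H i) ∨
      (x = (false, i) ∧ y = (true, i) ∧ SS H i) ∨
      (x = (true, i) ∧ y = (false, i) ∧ SS H i) := by
  obtain ⟨x1, x2⟩ := x
  obtain ⟨y1, y2⟩ := y
  constructor
  · intro h
    rcases (gp_adj hm _ _).1 (H.adj_sub h) with ⟨hl, hd | hd⟩ | ⟨hl, hd⟩ <;>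
      simp only at hl hd
    · subst hl; subst hd
      cases x1
      · exact ⟨x2, Or.inl ⟨rfl, rfl, h⟩⟩
      · exact ⟨x2, Or.inr (Or.inr (Or.inl ⟨rfl, rfl, h⟩))⟩
    · subst hl; subst hd
      cases x1
      · exact ⟨y2, Or.inr (Or.inl ⟨rfl, rfl, h.symm⟩)⟩
      · exact ⟨y2, Or.inr (Or.inr (Or.inr (Or.inl ⟨rfl, rfl, h.symm⟩)))⟩
    · subst hd
      cases x1 <;> cases y1
      · exact absurd rfl hl
      · exact ⟨x2, Or.inr (Or.inr (Or.inr (Or.inr (Or.inl ⟨rfl, rfl, h⟩))))⟩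
      · exact ⟨x2, Or.inr (Or.inr (Or.inr (Or.inr (Or.inr ⟨rfl, rfl, h.symm⟩))))⟩
      · exact absurd rfl hl
  · rintro ⟨i, h | h | h | h | h | h⟩ <;>
      obtain ⟨h1, h2, h3⟩ := h <;>
      · rw [Prod.mk.injEq] at h1 h2
        obtain ⟨h1a, h1b⟩ := h1
        obtain ⟨h2a, h2b⟩ := h2
        subst h1a; subst h1b; subst h2a; subst h2b
        first | exact h3 | exact h3.symm

end P6

section P7
variable {m : ℕ} (H : (GP m).Subgraph)

lemma nb_u (hm : 3 ≤ m) (i : ZMod m) : H.neighborSet (false, i) =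
    {y | (y = ((false, i + 1) : Bool × ZMod m) ∧ AA H i) ∨
      (y = (false, i - 1) ∧ AA H (i - 1)) ∨ (y = (true, i) ∧ SS H i)} := by
  have hsub : i - 1 + 1 = i := by ring
  ext y
  simp only [Subgraph.mem_neighborSet, Set.mem_setOf_eq]
  constructor
  · intro h
    rcases (adj_classify H hm).1 h with ⟨j, h1 | h1 | h1 | h1 | h1 | h1⟩ <;>
        obtain ⟨e1, e2, e3⟩ := h1 <;> rw [Prod.mk.injEq] at e1 <;>
        obtain ⟨e1a, e1b⟩ := e1
    · subst e1b; exact Or.inl ⟨e2, e3⟩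
    · have : j = i - 1 := by rw [e1b]; ring
      subst this
      exact Or.inr (Or.inl ⟨e2, e3⟩)
    · exact absurd e1a (by simp)
    · exact absurd e1a (by simp)
    · subst e1b; exact Or.inr (Or.inr ⟨e2, e3⟩)
    · exact absurd e1a (by simp)
  · rintro (⟨rfl, h⟩ | ⟨rfl, h⟩ | ⟨rfl, h⟩)
    · exact h
    · have h' := h.symm
      rwa [hsub] at h'
    · exact h

lemma nb_v (hm : 3 ≤ m) (i : ZMod m) : H.neighborSet (true, i) =
    {y | (y = ((true, i + 1) : Bool × ZMod m) ∧ BB H i) ∨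
      (y = (true, i - 1) ∧ BB H (i - 1)) ∨ (y = (false, i) ∧ SS H i)} := by
  have hsub : i - 1 + 1 = i := by ring
  ext y
  simp only [Subgraph.mem_neighborSet, Set.mem_setOf_eq]
  constructor
  · intro h
    rcases (adj_classify H hm).1 h with ⟨j, h1 | h1 | h1 | h1 | h1 | h1⟩ <;>
        obtain ⟨e1, e2, e3⟩ := h1 <;> rw [Prod.mk.injEq] at e1 <;>
        obtain ⟨e1a, e1b⟩ := e1
    · exact absurd e1a (by simp)
    · exact absurd e1a (by simp)
    · subst e1b; exact Or.inl ⟨e2, e3⟩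
    · have : j = i - 1 := by rw [e1b]; ring
      subst this
      exact Or.inr (Or.inl ⟨e2, e3⟩)
    · exact absurd e1a (by simp)
    · subst e1b; exact Or.inr (Or.inr ⟨e2, e3⟩)
  · rintro (⟨rfl, h⟩ | ⟨rfl, h⟩ | ⟨rfl, h⟩)
    · exact h
    · have h' := h.symm
      rwa [hsub] at h'
    · exact h.symm

variable {H}

lemma vert_of_aa {i : ZMod m} (h : AA H i) :
    (false, i) ∈ H.verts ∧ (false, i + 1) ∈ H.verts :=
  ⟨H.edge_vert h, H.edge_vert h.symm⟩

lemma vert_of_bb {i : ZMod m} (h : BB H i) :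
    (true, i) ∈ H.verts ∧ (true, i + 1) ∈ H.verts :=
  ⟨H.edge_vert h, H.edge_vert h.symm⟩

lemma vert_of_ss {i : ZMod m} (h : SS H i) :
    (false, i) ∈ H.verts ∧ (true, i) ∈ H.verts :=
  ⟨H.edge_vert h, H.edge_vert h.symm⟩

lemma exact_u (hm : 3 ≤ m) (hdeg : ∀ w ∈ H.verts, (H.neighborSet w).ncard = 2) (i : ZMod m) :
    (¬AA H (i - 1) ∧ ¬AA H i ∧ ¬SS H i) ∨ (AA H (i - 1) ∧ AA H i ∧ ¬SS H i) ∨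
      (AA H (i - 1) ∧ ¬AA H i ∧ SS H i) ∨ (¬AA H (i - 1) ∧ AA H i ∧ SS H i) := by
  have hsub : i - 1 + 1 = i := by ring
  by_cases hv : (false, i) ∈ H.verts
  · have hcard := hdeg _ hv
    rw [nb_u H hm] at hcard
    have d12 : ((false, i + 1) : Bool × ZMod m) ≠ (false, i - 1) := by
      rw [Ne, Prod.mk.injEq]
      rintro ⟨-, h⟩
      exact two_ne_zero' hm (by linear_combination h)
    have d13 : ((false, i + 1) : Bool × ZMod m) ≠ (true, i) := by simp
    have d23 : ((false, i - 1) : Bool × ZMod m) ≠ (true, i) := by simp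
    by_cases h1 : AA H (i - 1) <;> by_cases h2 : AA H i <;> by_cases h3 : SS H i <;>
      [ skip; skip; skip; skip; skip; skip; skip; skip ]
    · exfalso
      simp only [h1, h2, h3, and_true, or_false, false_or] at hcard
      have : {y | y = ((false, i + 1) : Bool × ZMod m) ∨ y = (false, i - 1) ∨ y = (true, i)} =
          {((false, i + 1) : Bool × ZMod m), (false, i - 1), (true, i)} := by
        ext y; simp [Set.mem_insert_iff]
      rw [this, Set.ncard_insert_of_notMem (by simp [d12, d13]),
        Set.ncard_pair d23] at hcard
      omega
    · exact Or.inr (Or.inl ⟨h1, h2, h3⟩)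
    · exact Or.inr (Or.inr (Or.inl ⟨h1, h2, h3⟩))
    · exfalso
      simp only [h1, h2, h3, and_true, and_false, or_false, false_or] at hcard
      have : {y | y = ((false, i - 1) : Bool × ZMod m)} = {((false, i - 1) : Bool × ZMod m)} := rfl
      rw [this, Set.ncard_singleton] at hcard
      omega
    · exact Or.inr (Or.inr (Or.inr ⟨h1, h2, h3⟩))
    · exfalso
      simp only [h1, h2, h3, and_true, and_false, or_false, false_or] at hcard
      have : {y | y = ((false, i + 1) : Bool × ZMod m)} = {((false, i + 1) : Bool × ZMod m)} := rfl
      rw [this, Set.ncard_singleton] at hcard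
      omega
    · exfalso
      simp only [h1, h2, h3, and_true, and_false, or_false, false_or] at hcard
      have : {y | y = ((true, i) : Bool × ZMod m)} = {((true, i) : Bool × ZMod m)} := rfl
      rw [this, Set.ncard_singleton] at hcard
      omega
    · exfalso
      simp only [h1, h2, h3, and_false, or_false] at hcard
      simp at hcard
  · refine Or.inl ⟨fun h => hv ?_, fun h => hv (vert_of_aa h).1, fun h => hv (vert_of_ss h).1⟩
    have := (vert_of_aa h).2
    rwa [hsub] at this

lemma exact_v (hm : 3 ≤ m) (hdeg : ∀ w ∈ H.verts, (H.neighborSet w).ncard = 2) (i : ZMod m) :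
    (¬BB H (i - 1) ∧ ¬BB H i ∧ ¬SS H i) ∨ (BB H (i - 1) ∧ BB H i ∧ ¬SS H i) ∨
      (BB H (i - 1) ∧ ¬BB H i ∧ SS H i) ∨ (¬BB H (i - 1) ∧ BB H i ∧ SS H i) := by
  have hsub : i - 1 + 1 = i := by ring
  by_cases hv : (true, i) ∈ H.verts
  · have hcard := hdeg _ hv
    rw [nb_v H hm] at hcard
    have d12 : ((true, i + 1) : Bool × ZMod m) ≠ (true, i - 1) := by
      rw [Ne, Prod.mk.injEq]
      rintro ⟨-, h⟩
      exact two_ne_zero' hm (by linear_combination h)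
    have d13 : ((true, i + 1) : Bool × ZMod m) ≠ (false, i) := by simp
    have d23 : ((true, i - 1) : Bool × ZMod m) ≠ (false, i) := by simp
    by_cases h1 : BB H (i - 1) <;> by_cases h2 : BB H i <;> by_cases h3 : SS H i <;>
      [ skip; skip; skip; skip; skip; skip; skip; skip ]
    · exfalso
      simp only [h1, h2, h3, and_true, or_false, false_or] at hcard
      have : {y | y = ((true, i + 1) : Bool × ZMod m) ∨ y = (true, i - 1) ∨ y = (false, i)} =
          {((true, i + 1) : Bool × ZMod m), (true, i - 1), (false, i)} := by
        ext y; simp [Set.mem_insert_iff]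
      rw [this, Set.ncard_insert_of_notMem (by simp [d12, d13]),
        Set.ncard_pair d23] at hcard
      omega
    · exact Or.inr (Or.inl ⟨h1, h2, h3⟩)
    · exact Or.inr (Or.inr (Or.inl ⟨h1, h2, h3⟩))
    · exfalso
      simp only [h1, h2, h3, and_true, and_false, or_false, false_or] at hcard
      have : {y | y = ((true, i - 1) : Bool × ZMod m)} = {((true, i - 1) : Bool × ZMod m)} := rfl
      rw [this, Set.ncard_singleton] at hcard
      omega
    · exact Or.inr (Or.inr (Or.inr ⟨h1, h2, h3⟩))
    · exfalso
      simp only [h1, h2, h3, and_true, and_false, or_false, false_or] at hcard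
      have : {y | y = ((true, i + 1) : Bool × ZMod m)} = {((true, i + 1) : Bool × ZMod m)} := rfl
      rw [this, Set.ncard_singleton] at hcard
      omega
    · exfalso
      simp only [h1, h2, h3, and_true, and_false, or_false, false_or] at hcard
      have : {y | y = ((false, i) : Bool × ZMod m)} = {((false, i) : Bool × ZMod m)} := rfl
      rw [this, Set.ncard_singleton] at hcard
      omega
    · exfalso
      simp only [h1, h2, h3, and_false, or_false] at hcard
      simp at hcard
  · refine Or.inl ⟨fun h => hv ?_, fun h => hv (vert_of_bb h).1, fun h => hv (vert_of_ss h).2⟩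
    have := (vert_of_bb h).2
    rwa [hsub] at this

lemma mem_u (hm : 3 ≤ m) (hdeg : ∀ w ∈ H.verts, (H.neighborSet w).ncard = 2) (i : ZMod m) :
    (false, i) ∈ H.verts ↔ (AA H (i - 1) ∨ AA H i ∨ SS H i) := by
  have hsub : i - 1 + 1 = i := by ring
  constructor
  · intro hv
    have hcard := hdeg _ hv
    have hne : (H.neighborSet (false, i)).Nonempty := by
      apply Set.nonempty_of_ncard_ne_zero; omega
    obtain ⟨y, hy⟩ := hne
    rw [nb_u H hm] at hy
    rcases hy with ⟨-, h⟩ | ⟨-, h⟩ | ⟨-, h⟩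
    · exact Or.inr (Or.inl h)
    · exact Or.inl h
    · exact Or.inr (Or.inr h)
  · rintro (h | h | h)
    · have := (vert_of_aa h).2
      rwa [hsub] at this
    · exact (vert_of_aa h).1
    · exact (vert_of_ss h).1

lemma mem_v (hm : 3 ≤ m) (hdeg : ∀ w ∈ H.verts, (H.neighborSet w).ncard = 2) (i : ZMod m) :
    (true, i) ∈ H.verts ↔ (BB H (i - 1) ∨ BB H i ∨ SS H i) := by
  have hsub : i - 1 + 1 = i := by ring
  constructor
  · intro hv
    have hcard := hdeg _ hv
    have hne : (H.neighborSet (true, i)).Nonempty := by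
      apply Set.nonempty_of_ncard_ne_zero; omega
    obtain ⟨y, hy⟩ := hne
    rw [nb_v H hm] at hy
    rcases hy with ⟨-, h⟩ | ⟨-, h⟩ | ⟨-, h⟩
    · exact Or.inr (Or.inl h)
    · exact Or.inl h
    · exact Or.inr (Or.inr h)
  · rintro (h | h | h)
    · have := (vert_of_bb h).2
      rwa [hsub] at this
    · exact (vert_of_bb h).1
    · exact (vert_of_ss h).2

lemma s_parity_a (hm : 3 ≤ m) (hdeg : ∀ w ∈ H.verts, (H.neighborSet w).ncard = 2) (i : ZMod m) :
    SS H i ↔ ¬(AA H (i - 1) ↔ AA H i) := by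
  rcases exact_u hm hdeg i with ⟨h1, h2, h3⟩ | ⟨h1, h2, h3⟩ | ⟨h1, h2, h3⟩ | ⟨h1, h2, h3⟩ <;>
    tauto

lemma s_parity_b (hm : 3 ≤ m) (hdeg : ∀ w ∈ H.verts, (H.neighborSet w).ncard = 2) (i : ZMod m) :
    SS H i ↔ ¬(BB H (i - 1) ↔ BB H i) := by
  rcases exact_v hm hdeg i with ⟨h1, h2, h3⟩ | ⟨h1, h2, h3⟩ | ⟨h1, h2, h3⟩ | ⟨h1, h2, h3⟩ <;>
    tauto

end P7

section P8
variable {m : ℕ} {H : (GP m).Subgraph}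

lemma zmod_exists_nat (hm : 3 ≤ m) (i j : ZMod m) : ∃ t : ℕ, j = i + (t : ZMod m) :=
  ⟨(j - i).val, by rw [natCast_val_self hm]; ring⟩

lemma prop_all_of_step (hm : 3 ≤ m) (P : ZMod m → Prop) (h : ∀ i, P i → P (i + 1))
    {i : ZMod m} (hi : P i) : ∀ j, P j := by
  have key : ∀ t : ℕ, P (i + (t : ZMod m)) := by
    intro t
    induction t with
    | zero => simpa using hi
    | succ t ih =>
      have : i + ((t + 1 : ℕ) : ZMod m) = (i + (t : ZMod m)) + 1 := by push_cast; ring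
      rw [this]
      exact h _ ih
  intro j
  obtain ⟨t, rfl⟩ := zmod_exists_nat hm i j
  exact key t

lemma prop_all_of_step_down (hm : 3 ≤ m) (P : ZMod m → Prop) (h : ∀ i, P i → P (i - 1))
    {i : ZMod m} (hi : P i) : ∀ j, P j := by
  have key : ∀ t : ℕ, P (i - (t : ZMod m)) := by
    intro t
    induction t with
    | zero => simpa using hi
    | succ t ih =>
      have : i - ((t + 1 : ℕ) : ZMod m) = (i - (t : ZMod m)) - 1 := by push_cast; ring
      rw [this]
      exact h _ ih
  intro j
  obtain ⟨t, rfl⟩ := zmod_exists_nat hm j i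
  have : j = (j + (t : ZMod m)) - (t : ZMod m) := by ring
  rw [this]
  exact key t

lemma iff_all_of_step (hm : 3 ≤ m) (P : ZMod m → Prop) (h : ∀ i, P i ↔ P (i + 1)) :
    ∀ i j, (P i ↔ P j) := by
  intro i
  exact prop_all_of_step hm (fun j => (P i ↔ P j)) (fun j hj => hj.trans (h j)) Iff.rfl

lemma ab_const (hm : 3 ≤ m) (hdeg : ∀ w ∈ H.verts, (H.neighborSet w).ncard = 2) :
    ∀ i j, ((AA H i ↔ BB H i) ↔ (AA H j ↔ BB H j)) := by
  apply iff_all_of_step hm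
  intro i
  have h1 := s_parity_a hm hdeg (i + 1)
  have h2 := s_parity_b hm hdeg (i + 1)
  rw [add_sub_cancel_right] at h1 h2
  tauto

lemma level_const (hm : 3 ≤ m) (hS : ∀ i, ¬SS H i) {x y : H.verts}
    (h : H.coe.Reachable x y) : x.val.1 = y.val.1 := by
  obtain ⟨w⟩ := h
  induction w with
  | nil => rfl
  | @cons a b c h' p ih =>
    have hab : a.val.1 = b.val.1 := by
      have h2 : H.Adj a.val b.val := by rwa [Subgraph.coe_adj] at h'
      rcases (adj_classify H hm).1 h2 with ⟨j, h3 | h3 | h3 | h3 | h3 | h3⟩ <;>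
          obtain ⟨e1, e2, e3⟩ := h3
      · rw [e1, e2]
      · rw [e1, e2]
      · rw [e1, e2]
      · rw [e1, e2]
      · exact absurd e3 (hS j)
      · exact absurd e3 (hS j)
    exact hab.trans ih

lemma eq_lvl (hm : 3 ≤ m) (hdeg : ∀ w ∈ H.verts, (H.neighborSet w).ncard = 2) (β : Bool)
    (hA : ∀ i, AA H i ↔ (β = false)) (hB : ∀ i, BB H i ↔ (β = true))
    (hS : ∀ i, ¬SS H i) : H = Lvl m β := by
  have hvert : H.verts = (Lvl m β).verts := by
    ext x
    obtain ⟨x1, x2⟩ := x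
    have hh : ((x1, x2) : Bool × ZMod m) ∈ (Lvl m β).verts ↔ x1 = β := Iff.rfl
    cases x1
    · rw [mem_u hm hdeg, hh]
      simp only [hA, hS]
      cases β <;> simp
    · rw [mem_v hm hdeg, hh]
      simp only [hB, hS]
      cases β <;> simp
  apply Subgraph.ext hvert
  ext x y
  constructor
  · intro h
    rw [lvl_adj hm]
    rcases (adj_classify H hm).1 h with ⟨j, h3 | h3 | h3 | h3 | h3 | h3⟩ <;>
        obtain ⟨e1, e2, e3⟩ := h3 <;> rw [e1, e2]
    · rw [hA] at e3; exact ⟨e3.symm, e3.symm, Or.inl rfl⟩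
    · rw [hA] at e3; exact ⟨e3.symm, e3.symm, Or.inr rfl⟩
    · rw [hB] at e3; exact ⟨e3.symm, e3.symm, Or.inl rfl⟩
    · rw [hB] at e3; exact ⟨e3.symm, e3.symm, Or.inr rfl⟩
    · exact absurd e3 (hS j)
    · exact absurd e3 (hS j)
  · intro h
    rw [lvl_adj hm] at h
    have hAdj : ∀ a : ZMod m, H.Adj (β, a) (β, a + 1) := by
      cases β
      · intro a; exact (hA a).2 rfl
      · intro a; exact (hB a).2 rfl
    obtain ⟨h1, h2, h3 | h3⟩ := h
    · obtain ⟨x1, x2⟩ := x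
      obtain ⟨y1, y2⟩ := y
      simp only at h1 h2 h3
      subst h3
      rw [h1, h2]
      exact hAdj x2
    · obtain ⟨x1, x2⟩ := x
      obtain ⟨y1, y2⟩ := y
      simp only at h1 h2 h3
      subst h3
      rw [h1, h2]
      exact (hAdj y2).symm

end P8

section P9
open scoped Classical
variable {m : ℕ} {H : (GP m).Subgraph}

lemma count_c1 (hm : 3 ≤ m) (hodd : Odd m)
    (hdeg : ∀ w ∈ H.verts, (H.neighborSet w).ncard = 2)
    (hab : ∀ i, ¬(AA H i ↔ BB H i)) :
    Odd H.verts.ncard ∧ ((∃ i, SS H i) → m < H.verts.ncard) := by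
  haveI : NeZero m := ⟨by omega⟩
  have hfin : H.verts.Finite := Set.toFinite _
  set T : Finset (Bool × ZMod m) := hfin.toFinset with hT
  have hTcard : H.verts.ncard = T.card := by
    rw [hT]
    exact Set.ncard_eq_toFinset_card _ hfin
  set F : Finset (ZMod m) := Finset.univ.filter (fun i => SS H i) with hF
  -- fiberwise count
  have hfib : T.card = ∑ i : ZMod m, (T.filter (fun x => x.2 = i)).card :=
    Finset.card_eq_sum_card_fiberwise (fun x _ => Finset.mem_univ x.2)
  have hmemT : ∀ x : Bool × ZMod m, x ∈ T ↔ x ∈ H.verts := by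
    intro x; rw [hT, Set.Finite.mem_toFinset]
  have hfibcard : ∀ i : ZMod m,
      (T.filter (fun x => x.2 = i)).card = if SS H i then 2 else 1 := by
    intro i
    by_cases hSi : SS H i
    · rw [if_pos hSi]
      have : T.filter (fun x => x.2 = i) = {(false, i), (true, i)} := by
        ext x
        obtain ⟨x1, x2⟩ := x
        simp only [Finset.mem_filter, Finset.mem_insert, Finset.mem_singleton,
          Prod.mk.injEq, hmemT]
        constructor
        · rintro ⟨hv, rfl⟩
          cases x1
          · exact Or.inl ⟨rfl, rfl⟩
          · exact Or.inr ⟨rfl, rfl⟩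
        · rintro (⟨rfl, rfl⟩ | ⟨rfl, rfl⟩)
          · exact ⟨(vert_of_ss hSi).1, rfl⟩
          · exact ⟨(vert_of_ss hSi).2, rfl⟩
      rw [this]
      rw [Finset.card_insert_of_notMem (by simp), Finset.card_singleton]
    · rw [if_neg hSi]
      have hor : ((false, i) : Bool × ZMod m) ∈ H.verts ∨ ((true, i) : Bool × ZMod m) ∈ H.verts := by
        by_contra hno
        push_neg at hno
        obtain ⟨hnu, hnv⟩ := hno
        rw [mem_u hm hdeg] at hnu
        rw [mem_v hm hdeg] at hnv
        push_neg at hnu hnv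
        exact hab i (by tauto)
      have hnboth : ¬(((false, i) : Bool × ZMod m) ∈ H.verts ∧
          ((true, i) : Bool × ZMod m) ∈ H.verts) := by
        rintro ⟨hu, hv⟩
        rw [mem_u hm hdeg] at hu
        rw [mem_v hm hdeg] at hv
        have hpa := s_parity_a hm hdeg i
        have hpb := s_parity_b hm hdeg i
        exact hab i (by tauto)
      rcases hor with hu | hv
      · have : T.filter (fun x => x.2 = i) = {(false, i)} := by
          ext x
          obtain ⟨x1, x2⟩ := x
          simp only [Finset.mem_filter, Finset.mem_singleton, Prod.mk.injEq, hmemT]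
          constructor
          · rintro ⟨hv', rfl⟩
            cases x1
            · exact ⟨rfl, rfl⟩
            · exact absurd ⟨hu, hv'⟩ hnboth
          · rintro ⟨rfl, rfl⟩
            exact ⟨hu, rfl⟩
        rw [this, Finset.card_singleton]
      · have : T.filter (fun x => x.2 = i) = {(true, i)} := by
          ext x
          obtain ⟨x1, x2⟩ := x
          simp only [Finset.mem_filter, Finset.mem_singleton, Prod.mk.injEq, hmemT]
          constructor
          · rintro ⟨hv', rfl⟩
            cases x1
            · exact absurd ⟨hv', hv⟩ hnboth
            · exact ⟨rfl, rfl⟩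
          · rintro ⟨rfl, rfl⟩
            exact ⟨hv, rfl⟩
        rw [this, Finset.card_singleton]
  have hcount : H.verts.ncard = m + F.card := by
    rw [hTcard, hfib]
    have : ∀ i : ZMod m, (T.filter (fun x => x.2 = i)).card
        = 1 + (if SS H i then 1 else 0) := by
      intro i
      rw [hfibcard i]
      by_cases hSi : SS H i <;> simp [hSi]
    rw [Finset.sum_congr rfl (fun i _ => this i), Finset.sum_add_distrib]
    congr 1
    · simp [ZMod.card]
    · rw [Finset.sum_boole]
      simp [hF]
  -- evenness of F.card
  have heven : Even F.card := by
    have key : ∀ i : ZMod m, (if SS H i then (1 : ZMod 2) else 0) =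
        (if AA H (i - 1) then (1 : ZMod 2) else 0) + (if AA H i then (1 : ZMod 2) else 0) := by
      intro i
      have hp := s_parity_a hm hdeg i
      by_cases h1 : AA H (i - 1) <;> by_cases h2 : AA H i <;>
        simp [h1, h2, hp] <;> try decide
    have hsum : (F.card : ZMod 2) = 0 := by
      have e1 : (F.card : ZMod 2) = ∑ i : ZMod m, (if SS H i then (1 : ZMod 2) else 0) := by
        rw [Finset.sum_boole]
        try simp [hF]
      rw [e1, Finset.sum_congr rfl (fun i _ => key i), Finset.sum_add_distrib]
      have e2 : ∑ i : ZMod m, (if AA H (i - 1) then (1 : ZMod 2) else 0) =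
          ∑ i : ZMod m, (if AA H i then (1 : ZMod 2) else 0) := by
        apply Fintype.sum_equiv (Equiv.subRight (1 : ZMod m))
        intro i
        rfl
      rw [e2, ← two_mul]
      rw [show ((2 : ZMod 2) = 0) from rfl]
      ring
    have : (2 : ℕ) ∣ F.card := by
      rwa [← ZMod.natCast_eq_zero_iff]
    exact even_iff_two_dvd.2 this
  constructor
  · rw [hcount]
    rcases hodd with ⟨r, hr⟩
    rcases heven with ⟨c, hc⟩
    exact ⟨r + c, by omega⟩
  · rintro ⟨i, hSi⟩
    have : i ∈ F := by simp [hF, hSi]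
    have : 0 < F.card := Finset.card_pos.2 ⟨i, this⟩
    omega
end P9

section P10
open scoped Classical
variable {m : ℕ} {H : (GP m).Subgraph}

lemma walk_closed {P : Bool × ZMod m → Prop} (hcl : ∀ x y, P x → H.Adj x y → P y)
    {a b : H.verts} (h : H.coe.Reachable a b) (ha : P a.val) : P b.val := by
  obtain ⟨w⟩ := h
  induction w with
  | nil => exact ha
  | cons h' p ih => exact ih (hcl _ _ ha (by rwa [Subgraph.coe_adj] at h'))

lemma eq_cyc (hm : 3 ≤ m) (hconn : H.Connected)
    (hdeg : ∀ w ∈ H.verts, (H.neighborSet w).ncard = 2)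
    (hab : ∀ i, AA H i ↔ BB H i)
    (hex : ∃ i, AA H i) (hex2 : ∃ i, ¬AA H i) :
    ∃ (i₀ : ZMod m) (k : ℕ), 1 ≤ k ∧ k < m ∧ H = Cyc i₀ k := by
  -- a "rising edge"
  have hrise : ∃ i, AA H i ∧ ¬AA H (i - 1) := by
    by_contra hno
    push_neg at hno
    obtain ⟨i1, hi1⟩ := hex
    obtain ⟨j1, hj1⟩ := hex2
    exact hj1 (prop_all_of_step_down hm (AA H) hno hi1 j1)
  obtain ⟨i₀, hAi₀, hAprev⟩ := hrise
  have hm1 : i₀ + ((m - 1 : ℕ) : ZMod m) = i₀ - 1 := by rw [neg_one_eq hm]; ring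
  have hwit : ∃ t : ℕ, ¬AA H (i₀ + (t : ZMod m)) := ⟨m - 1, by rw [hm1]; exact hAprev⟩
  set k := Nat.find hwit with hkdef
  have hAk : ¬AA H (i₀ + (k : ZMod m)) := Nat.find_spec hwit
  have hrun : ∀ t, t < k → AA H (i₀ + (t : ZMod m)) := fun t ht => not_not.1 (Nat.find_min hwit ht)
  have hk1 : 1 ≤ k := by
    rcases Nat.eq_zero_or_pos k with h0 | h1
    · exfalso; apply hAk; rw [h0]; simpa using hAi₀
    · exact h1
  have hkm1 : k ≤ m - 1 := Nat.find_le (by rw [hm1]; exact hAprev)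
  have hkm : k < m := by omega
  -- closure of the candidate vertex set under H-adjacency
  have hcl : ∀ x y : Bool × ZMod m, x ∈ (Cyc i₀ k).verts → H.Adj x y → y ∈ (Cyc i₀ k).verts := by
    rintro x y ⟨t, htk, hx2⟩ hxy
    have htm : t < m := lt_of_le_of_lt htk hkm
    have hstep : ∀ j : ZMod m, AA H j → j = x.2 →
        (∃ t' ≤ k, j + 1 = i₀ + (t' : ZMod m)) := by
      intro j hAj hj
      have hjt : j = i₀ + (t : ZMod m) := by rw [hj, hx2]
      have htk' : t < k := by
        rcases Nat.lt_or_ge t k with h | h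
        · exact h
        · exfalso
          have : t = k := by omega
          rw [hjt, this] at hAj
          exact hAk hAj
      exact ⟨t + 1, htk', by rw [hjt]; push_cast; ring⟩
    have hstep' : ∀ j : ZMod m, AA H j → j + 1 = x.2 →
        (∃ t' ≤ k, j = i₀ + (t' : ZMod m)) := by
      intro j hAj hj
      have hjt : j = i₀ + (t : ZMod m) - 1 := by
        rw [← hx2, ← hj]; ring
      rcases Nat.eq_zero_or_pos t with h0 | h1
      · exfalso
        apply hAprev
        have : j = i₀ - 1 := by rw [hjt, h0]; push_cast; ring
        rwa [this] at hAj
      · refine ⟨t - 1, by omega, ?_⟩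
        rw [hjt, Nat.cast_sub h1, Nat.cast_one]; ring
    rcases (adj_classify H hm).1 hxy with ⟨j, h3 | h3 | h3 | h3 | h3 | h3⟩ <;>
        obtain ⟨e1, e2, e3⟩ := h3 <;> rw [Prod.mk.injEq] at e1 e2
    · obtain ⟨t', ht', he⟩ := hstep j e3 (by rw [← e1.2])
      exact ⟨t', ht', by rw [← e2.2] at he; exact he⟩
    · obtain ⟨t', ht', he⟩ := hstep' j e3 (by rw [← e1.2])
      exact ⟨t', ht', by rw [← e2.2] at he; exact he⟩
    · obtain ⟨t', ht', he⟩ := hstep j ((hab j).2 e3) (by rw [← e1.2])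
      exact ⟨t', ht', by rw [← e2.2] at he; exact he⟩
    · obtain ⟨t', ht', he⟩ := hstep' j ((hab j).2 e3) (by rw [← e1.2])
      exact ⟨t', ht', by rw [← e2.2] at he; exact he⟩
    · exact ⟨t, htk, by rw [e2.2, ← e1.2]; exact hx2⟩
    · exact ⟨t, htk, by rw [e2.2, ← e1.2]; exact hx2⟩
  have hu0 : (false, i₀) ∈ H.verts := (vert_of_aa hAi₀).1
  have hu0L : ((false, i₀) : Bool × ZMod m) ∈ (Cyc i₀ k).verts := ⟨0, Nat.zero_le _, by simp⟩
  have hvsub : ∀ z ∈ H.verts, z ∈ (Cyc i₀ k).verts := fun z hz =>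
    walk_closed hcl (hconn.preconnected ⟨(false, i₀), hu0⟩ ⟨z, hz⟩) hu0L
  have hAchar : ∀ j, AA H j ↔ ∃ t, t < k ∧ j = i₀ + (t : ZMod m) := by
    intro j
    constructor
    · intro hAj
      obtain ⟨t, htk, hj⟩ := hvsub _ (vert_of_aa hAj).1
      simp only at hj
      rcases Nat.lt_or_ge t k with h | h
      · exact ⟨t, h, hj⟩
      · exfalso
        have : t = k := by omega
        rw [this] at hj
        rw [hj] at hAj
        exact hAk hAj
    · rintro ⟨t, ht, rfl⟩
      exact hrun t ht
  have hSchar : ∀ j, SS H j ↔ (j = i₀ ∨ j = i₀ + (k : ZMod m)) := by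
    intro j
    have hp := s_parity_a hm hdeg j
    constructor
    · intro hSj
      have hne := hp.1 hSj
      by_cases hAj : AA H j
      · left
        obtain ⟨t, ht, hj⟩ := (hAchar j).1 hAj
        rcases Nat.eq_zero_or_pos t with h0 | h1
        · rw [h0] at hj; simpa using hj
        · exfalso
          apply hne
          constructor
          · intro _; exact hAj
          · intro _
            have : j - 1 = i₀ + ((t - 1 : ℕ) : ZMod m) := by
              rw [hj, Nat.cast_sub h1, Nat.cast_one]; ring
            rw [this]
            exact hrun _ (by omega)
      · right
        have hAj' : AA H (j - 1) := by tauto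
        obtain ⟨t, ht, hj⟩ := (hAchar (j - 1)).1 hAj'
        have hjj : j = i₀ + ((t + 1 : ℕ) : ZMod m) := by
          have : j = (j - 1) + 1 := by ring
          rw [this, hj]; push_cast; ring
        rcases Nat.lt_or_ge (t + 1) k with h | h
        · exact absurd ((hAchar j).2 ⟨t + 1, h, hjj⟩) hAj
        · have : t + 1 = k := by omega
          rw [← this]; exact hjj
    · rintro (rfl | rfl)
      · exact hp.2 (by tauto)
      · apply hp.2
        intro hiff
        apply hAk
        apply hiff.1
        have : i₀ + (k : ZMod m) - 1 = i₀ + ((k - 1 : ℕ) : ZMod m) := by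
          rw [Nat.cast_sub hk1, Nat.cast_one]; ring
        rw [this]
        exact hrun _ (by omega)
  have hBchar : ∀ j, BB H j ↔ ∃ t, t < k ∧ j = i₀ + (t : ZMod m) := fun j =>
    (hab j).symm.trans (hAchar j)
  refine ⟨i₀, k, hk1, hkm, ?_⟩
  have hvert : H.verts = (Cyc i₀ k).verts := by
    ext x
    obtain ⟨x1, x2⟩ := x
    have hCv : ((x1, x2) : Bool × ZMod m) ∈ (Cyc i₀ k).verts ↔
        ∃ t ≤ k, x2 = i₀ + (t : ZMod m) := Iff.rfl
    have main : (AA H (x2 - 1) ∨ AA H x2 ∨ SS H x2) ↔ ∃ t ≤ k, x2 = i₀ + (t : ZMod m) := by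
      constructor
      · rintro (h | h | h)
        · obtain ⟨t, ht, hj⟩ := (hAchar _).1 h
          refine ⟨t + 1, by omega, ?_⟩
          have : x2 = (x2 - 1) + 1 := by ring
          rw [this, hj]; push_cast; ring
        · obtain ⟨t, ht, hj⟩ := (hAchar _).1 h
          exact ⟨t, by omega, hj⟩
        · rcases (hSchar _).1 h with h2 | h2
          · exact ⟨0, by omega, by simpa using h2⟩
          · exact ⟨k, le_refl _, h2⟩
      · rintro ⟨t, ht, rfl⟩
        rcases Nat.lt_or_ge t k with hlt | hge
        · exact Or.inr (Or.inl (hrun t hlt))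
        · have : t = k := by omega
          subst this
          exact Or.inr (Or.inr ((hSchar _).2 (Or.inr rfl)))
    cases x1
    · rw [mem_u hm hdeg, hCv]; exact main
    · rw [mem_v hm hdeg, hCv]
      rw [← hab, ← hab]
      exact main
  apply Subgraph.ext hvert
  ext x y
  constructor
  · intro h
    rw [cyc_adj hm]
    rcases (adj_classify H hm).1 h with ⟨j, h3 | h3 | h3 | h3 | h3 | h3⟩ <;>
        obtain ⟨e1, e2, e3⟩ := h3 <;> rw [e1, e2] <;>
        [ rw [hAchar] at e3; rw [hAchar] at e3; rw [hBchar] at e3; rw [hBchar] at e3;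
          rw [hSchar] at e3; rw [hSchar] at e3 ] <;>
        [ obtain ⟨t, ht, hj⟩ := e3; obtain ⟨t, ht, hj⟩ := e3; obtain ⟨t, ht, hj⟩ := e3;
          obtain ⟨t, ht, hj⟩ := e3; skip; skip ]
    · exact Or.inl ⟨rfl, t, ht, Or.inl ⟨hj, rfl⟩⟩
    · exact Or.inl ⟨rfl, t, ht, Or.inr ⟨hj, rfl⟩⟩
    · exact Or.inl ⟨rfl, t, ht, Or.inl ⟨hj, rfl⟩⟩
    · exact Or.inl ⟨rfl, t, ht, Or.inr ⟨hj, rfl⟩⟩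
    · exact Or.inr ⟨by simp, rfl, e3⟩
    · exact Or.inr ⟨by simp, rfl, by simpa using e3⟩
  · intro h
    rcases (cyc_adj hm).1 h with ⟨hl, t, ht, ⟨e1, e2⟩ | ⟨e1, e2⟩⟩ | ⟨hl, he, hc⟩
    · obtain ⟨x1, x2⟩ := x
      obtain ⟨y1, y2⟩ := y
      simp only at hl e1 e2
      subst hl
      subst e2
      subst e1
      cases x1
      · exact (hAchar _).2 ⟨t, ht, rfl⟩
      · exact (hBchar _).2 ⟨t, ht, rfl⟩
    · obtain ⟨x1, x2⟩ := x
      obtain ⟨y1, y2⟩ := y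
      simp only at hl e1 e2
      subst hl
      subst e2
      subst e1
      cases x1
      · exact ((hAchar _).2 ⟨t, ht, rfl⟩).symm
      · exact ((hBchar _).2 ⟨t, ht, rfl⟩).symm
    · obtain ⟨x1, x2⟩ := x
      obtain ⟨y1, y2⟩ := y
      simp only at hl he hc
      subst he
      have hS : SS H x2 := (hSchar _).2 hc
      cases x1 <;> cases y1
      · exact absurd rfl hl
      · exact hS
      · exact hS.symm
      · exact absurd rfl hl

end P10

section P11
variable {m : ℕ}

theorem classify (hm : 3 ≤ m) (hodd : Odd m) {H : (GP m).Subgraph}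
    (hconn : H.Connected) (hdeg : ∀ w ∈ H.verts, (H.neighborSet w).ncard = 2) :
    (H = Lvl m false ∨ H = Lvl m true) ∨
      (∃ i₀ k, 1 ≤ k ∧ k < m ∧ H = Cyc i₀ k) ∨
      (Odd H.verts.ncard ∧ m < H.verts.ncard) := by
  by_cases hc : (AA H 0 ↔ BB H 0)
  · have hab : ∀ i, AA H i ↔ BB H i := fun i => (ab_const hm hdeg i 0).2 hc
    by_cases hex : ∃ i, AA H i
    · by_cases hex2 : ∃ i, ¬AA H i
      · exact Or.inr (Or.inl (eq_cyc hm hconn hdeg hab hex hex2))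
      · push_neg at hex2
        exfalso
        have hS : ∀ i, ¬SS H i := by
          intro i hSi
          exact (s_parity_a hm hdeg i).1 hSi ⟨fun _ => hex2 i, fun _ => hex2 (i - 1)⟩
        have hu : ((false, 0) : Bool × ZMod m) ∈ H.verts := (vert_of_aa (hex2 0)).1
        have hv : ((true, 0) : Bool × ZMod m) ∈ H.verts := (vert_of_bb ((hab 0).1 (hex2 0))).1
        have := level_const hm hS (hconn.preconnected ⟨(false, 0), hu⟩ ⟨(true, 0), hv⟩)
        simpa using this
    · exfalso
      push_neg at hex
      have hB : ∀ i, ¬BB H i := fun i h => hex i ((hab i).2 h)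
      have hS : ∀ i, ¬SS H i := fun i hSi =>
        (s_parity_a hm hdeg i).1 hSi (iff_of_false (hex (i - 1)) (hex i))
      obtain ⟨⟨w1, w2⟩, hw⟩ := hconn.nonempty
      cases w1
      · rw [mem_u hm hdeg] at hw; tauto
      · rw [mem_v hm hdeg] at hw; tauto
  · have hab : ∀ i, ¬(AA H i ↔ BB H i) := fun i h => hc ((ab_const hm hdeg i 0).1 h)
    by_cases hs : ∃ i, SS H i
    · have := count_c1 hm hodd hdeg hab
      exact Or.inr (Or.inr ⟨this.1, this.2 hs⟩)
    · push_neg at hs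
      have hstep : ∀ i : ZMod m, AA H i ↔ AA H (i + 1) := by
        intro i
        have hp := s_parity_a hm hdeg (i + 1)
        rw [add_sub_cancel_right] at hp
        tauto
      have hconst := iff_all_of_step hm (AA H) hstep
      by_cases hA0 : AA H 0
      · have hA : ∀ i, AA H i := fun i => (hconst 0 i).1 hA0
        have hB : ∀ i, ¬BB H i := fun i h => hab i (iff_of_true (hA i) h)
        refine Or.inl (Or.inl (eq_lvl hm hdeg false ?_ ?_ hs))
        · exact fun i => iff_of_true (hA i) rfl
        · exact fun i => iff_of_false (hB i) (by simp)
      · have hA : ∀ i, ¬AA H i := fun i h => hA0 ((hconst 0 i).2 h)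
        have hB : ∀ i, BB H i := fun i => by have := hab i; tauto
        refine Or.inl (Or.inr (eq_lvl hm hdeg true ?_ ?_ hs))
        · exact fun i => iff_of_false (hA i) (by simp)
        · exact fun i => iff_of_true (hB i) rfl

theorem count_even (hm : 3 ≤ m) (hodd : Odd m) {l : ℕ} (hl2 : 2 ≤ l) (hlm : l ≤ m) :
    Nat.card {H : (GP m).Subgraph // H.Connected ∧
      (∀ w ∈ H.verts, (H.neighborSet w).ncard = 2) ∧ H.verts.ncard = 2 * l} = m := by
  have hk1 : 1 ≤ l - 1 := by omega
  have hkm : l - 1 < m := by omega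
  have hprop : ∀ i : ZMod m, (Cyc i (l - 1)).Connected ∧
      (∀ w ∈ (Cyc i (l - 1)).verts, ((Cyc i (l - 1)).neighborSet w).ncard = 2) ∧
      (Cyc i (l - 1)).verts.ncard = 2 * l := by
    intro i
    refine ⟨cyc_connected hm hk1 hkm, cyc_deg hm hk1 hkm, ?_⟩
    rw [cyc_verts_ncard hkm]
    omega
  let f : ZMod m → {H : (GP m).Subgraph // H.Connected ∧
      (∀ w ∈ H.verts, (H.neighborSet w).ncard = 2) ∧ H.verts.ncard = 2 * l} :=
    fun i => ⟨Cyc i (l - 1), hprop i⟩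
  have hbij : Function.Bijective f := by
    constructor
    · intro i j hij
      exact cyc_injective hm hk1 hkm (congrArg Subtype.val hij)
    · rintro ⟨H, hconn, hdeg, hcard⟩
      rcases classify hm hodd hconn hdeg with (rfl | rfl) | ⟨i₀, k, hk1', hkm', rfl⟩ | ⟨hoddc, -⟩
      · exfalso
        rw [lvl_verts_ncard] at hcard
        rcases hodd with ⟨r, hr⟩
        omega
      · exfalso
        rw [lvl_verts_ncard] at hcard
        rcases hodd with ⟨r, hr⟩
        omega
      · have := cyc_verts_ncard (i₀ := i₀) hkm'
        rw [this] at hcard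
        have hkl : k = l - 1 := by omega
        subst hkl
        exact ⟨i₀, rfl⟩
      · exfalso
        rw [hcard] at hoddc
        rcases hoddc with ⟨r, hr⟩
        omega
  rw [← Nat.card_eq_of_bijective f hbij, Nat.card_zmod]

theorem count_odd (hm : 3 ≤ m) (hodd : Odd m) :
    Nat.card {H : (GP m).Subgraph // H.Connected ∧
      (∀ w ∈ H.verts, (H.neighborSet w).ncard = 2) ∧ H.verts.ncard = m} = 2 := by
  have hprop : ∀ β : Bool, (Lvl m β).Connected ∧
      (∀ w ∈ (Lvl m β).verts, ((Lvl m β).neighborSet w).ncard = 2) ∧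
      (Lvl m β).verts.ncard = m :=
    fun β => ⟨lvl_connected hm β, lvl_deg hm β, lvl_verts_ncard β⟩
  let f : Bool → {H : (GP m).Subgraph // H.Connected ∧
      (∀ w ∈ H.verts, (H.neighborSet w).ncard = 2) ∧ H.verts.ncard = m} :=
    fun β => ⟨Lvl m β, hprop β⟩
  have hbij : Function.Bijective f := by
    constructor
    · intro β β' hββ'
      have h := congrArg Subtype.val hββ'
      simp only [f] at h
      have : ((β, (0 : ZMod m)) : Bool × ZMod m) ∈ (Lvl m β').verts := by
        rw [← h]; rfl
      exact this
    · rintro ⟨H, hconn, hdeg, hcard⟩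
      rcases classify hm hodd hconn hdeg with (rfl | rfl) | ⟨i₀, k, hk1', hkm', rfl⟩ | ⟨-, hgt⟩
      · exact ⟨false, rfl⟩
      · exact ⟨true, rfl⟩
      · exfalso
        rw [cyc_verts_ncard hkm'] at hcard
        rcases hodd with ⟨r, hr⟩
        omega
      · exfalso
        omega
  rw [← Nat.card_eq_of_bijective f hbij, Nat.card_eq_fintype_card]
  rfl

end P11
end GPAux

theorem GP_cycle_counts (n : ℕ) (hn : 1 ≤ n) :
    (∀ l : ℕ, 2 ≤ l → l ≤ 2 * n + 1 →
      Nat.card {H : (GP (2 * n + 1)).Subgraph //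
        H.Connected ∧ (∀ w ∈ H.verts, (H.neighborSet w).ncard = 2) ∧
          H.verts.ncard = 2 * l} = 2 * n + 1) ∧
    Nat.card {H : (GP (2 * n + 1)).Subgraph //
      H.Connected ∧ (∀ w ∈ H.verts, (H.neighborSet w).ncard = 2) ∧
        H.verts.ncard = 2 * n + 1} = 2 := by
  have hm : 3 ≤ 2 * n + 1 := by omega
  have hodd : Odd (2 * n + 1) := ⟨n, by ring⟩
  exact ⟨fun l hl2 hlm => GPAux.count_even hm hodd hl2 hlm, GPAux.count_odd hm hodd⟩
end

section
/- The action of the automorphism group of the generalized Petersen graph P(5,1) on the set of matchings of size five of P(5,1) (i.e., its perfect matchings) has exactly 3 orbits; that is, up to the automorphic equivalence, there are exactly 3 matchings of size five in P(5,1). -/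
open SimpleGraph

set_option maxRecDepth 100000

/-- `M` is a matching of `G` (a set of pairwise disjoint edges of `G`). -/
def IsMatchingSet {V : Type*} (G : SimpleGraph V) (M : Finset (Sym2 V)) : Prop :=
  ↑M ⊆ G.edgeSet ∧ ∀ e ∈ M, ∀ f ∈ M, e ≠ f → ∀ x, x ∈ e → x ∉ f

/-- Two edge sets of `G` are automorphic: some automorphism of `G` carries one to the other. -/
def Automorphic {V : Type*} (G : SimpleGraph V) (S₁ S₂ : Finset (Sym2 V)) : Prop :=
  ∃ φ : G ≃g G, ∀ x y, G.Adj x y → (s(x, y) ∈ S₁ ↔ s(φ x, φ y) ∈ S₂)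

/- ### Auxiliary set-up -/

instance GPdec (m : ℕ) : DecidableRel (GP m).Adj := fun a b =>
  decidable_of_iff (a ≠ b ∧ (((a.1 = b.1 ∧ b.2 = a.2 + 1) ∨ (a.1 ≠ b.1 ∧ a.2 = b.2)) ∨
      ((b.1 = a.1 ∧ a.2 = b.2 + 1) ∨ (b.1 ≠ a.1 ∧ b.2 = a.2))))
    (by rw [GP, SimpleGraph.fromRel_adj])

abbrev V5 := Bool × ZMod 5

def rot (j : ZMod 5) (x : V5) : V5 := (x.1, x.2 + j)

/-- The 15 edges of `GP 5` as ordered pairs. -/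
def E : List (V5 × V5) :=
  [((false,0),(false,1)), ((false,1),(false,2)), ((false,2),(false,3)), ((false,3),(false,4)),
   ((false,4),(false,0)),
   ((true,0),(true,1)), ((true,1),(true,2)), ((true,2),(true,3)), ((true,3),(true,4)),
   ((true,4),(true,0)),
   ((false,0),(true,0)), ((false,1),(true,1)), ((false,2),(true,2)), ((false,3),(true,3)),
   ((false,4),(true,4))]

def RepA : Finset (Sym2 V5) := {s(((true:Bool), (0:ZMod 5)), (false, 0)), s((true, 1), (false, 1)),
  s((true, 2), (false, 2)), s((true, 3), (false, 3)), s((true, 4), (false, 4))}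
def RepB : Finset (Sym2 V5) := {s(((true:Bool), (0:ZMod 5)), (false, 0)), s((true, 1), (true, 2)),
  s((true, 3), (false, 3)), s((true, 4), (false, 4)), s((false, 1), (false, 2))}
def RepC : Finset (Sym2 V5) := {s(((true:Bool), (0:ZMod 5)), (false, 0)), s((true, 1), (true, 2)),
  s((true, 3), (true, 4)), s((false, 1), (false, 2)), s((false, 3), (false, 4))}

def Reps : Fin 3 → Finset (Sym2 V5)
  | 0 => RepA | 1 => RepB | 2 => RepC

def disj (p q : V5 × V5) : Prop := p.1 ≠ q.1 ∧ p.1 ≠ q.2 ∧ p.2 ≠ q.1 ∧ p.2 ≠ q.2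
instance : DecidableRel disj := fun p q => by unfold disj; infer_instance

def isRep (M : Finset (Sym2 V5)) : Prop :=
  ∃ k : Fin 3, ∃ j : ZMod 5, M = (Reps k).image (Sym2.map (rot j))
instance : DecidablePred isRep := fun M => by unfold isRep; infer_instance

/- ### Brute force enumeration of perfect matchings -/

theorem lemmaA : ∀ l ∈ List.sublistsLen 5 E, l.Pairwise disj →
    isRep (l.map fun p => s(p.1, p.2)).toFinset := by decide +kernel

theorem nodupE : (E.map fun p => s(p.1, p.2)).Nodup := by decide +kernel

theorem edge_repr : ∀ x y : V5, (GP 5).Adj x y →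
    ∃ p ∈ E, s(x, y) = s(p.1, p.2) := by decide +kernel

/-- Every matching of size 5 of `GP 5` is a rotated copy of one of the three models. -/
theorem classify (M : Finset (Sym2 V5)) (hM : IsMatchingSet (GP 5) M) (hcard : M.card = 5) :
    isRep M := by
  classical
  set f : V5 × V5 → Sym2 V5 := fun p => s(p.1, p.2) with hf
  set l : List (V5 × V5) := E.filter (fun p => s(p.1, p.2) ∈ M) with hl
  have hsub : l.Sublist E := List.filter_sublist
  have hmemM : ∀ p ∈ l, f p ∈ M := by
    intro p hp
    have := List.of_mem_filter hp
    simpa using this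
  have htf : (l.map f).toFinset = M := by
    ext e
    simp only [List.mem_toFinset, List.mem_map]
    constructor
    · rintro ⟨p, hp, rfl⟩; exact hmemM p hp
    · intro he
      have hedge : e ∈ (GP 5).edgeSet := hM.1 he
      induction e with
      | _ x y =>
        obtain ⟨p, hpE, hpe⟩ := edge_repr x y hedge
        refine ⟨p, ?_, hpe.symm⟩
        rw [hl, List.mem_filter]
        exact ⟨hpE, by simp [← hpe, he]⟩
  have hnodup : (l.map f).Nodup := (hsub.map f).nodup nodupE
  have hlen : l.length = 5 := by
    have := List.toFinset_card_of_nodup hnodup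
    rw [htf, hcard, List.length_map] at this
    omega
  have hpw : l.Pairwise disj := by
    have h1 : (l.map f).Pairwise (· ≠ ·) := hnodup
    have h2 : l.Pairwise (fun p q => f p ≠ f q) := (List.pairwise_map).mp h1
    refine List.Pairwise.imp_of_mem ?_ h2
    intro p q hp hq hne
    have hdisj := hM.2 (f p) (hmemM p hp) (f q) (hmemM q hq) hne
    have h1 : p.1 ∉ f q := hdisj p.1 (Sym2.mem_mk_left _ _)
    have h2 : p.2 ∉ f q := hdisj p.2 (Sym2.mem_mk_right _ _)
    rw [hf] at h1 h2
    simp only [Sym2.mem_iff, not_or] at h1 h2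
    exact ⟨h1.1, h1.2, h2.1, h2.2⟩
  have hmem : l ∈ List.sublistsLen 5 E := List.mem_sublistsLen.mpr ⟨hsub, hlen⟩
  have := lemmaA l hmem hpw
  rwa [htf] at this
/- ### Rotation automorphisms -/

theorem rot_rot : ∀ (j : ZMod 5) (x : V5), rot (-j) (rot j x) = x := by decide
theorem rot_rot' : ∀ (j : ZMod 5) (x : V5), rot j (rot (-j) x) = x := by decide
theorem rot_adj : ∀ (j : ZMod 5) (x y : V5),
    (GP 5).Adj (rot j x) (rot j y) ↔ (GP 5).Adj x y := by decide

def rotIso (j : ZMod 5) : GP 5 ≃g GP 5 where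
  toFun := rot j
  invFun := rot (-j)
  left_inv := rot_rot j
  right_inv := rot_rot' j
  map_rel_iff' := by intro x y; exact rot_adj j x y

theorem rot_injective (j : ZMod 5) : Function.Injective (rot j) :=
  (rotIso j).toEquiv.injective

theorem autRot (k : Fin 3) (j : ZMod 5) :
    Automorphic (GP 5) ((Reps k).image (Sym2.map (rot j))) (Reps k) := by
  refine ⟨rotIso (-j), fun x y _ => ?_⟩
  have hinj : Function.Injective (Sym2.map (rot j)) := Sym2.map.injective (rot_injective j)
  constructor
  · intro hmem
    obtain ⟨z, hz, hze⟩ := Finset.mem_image.mp hmem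
    have : Sym2.map (rot (-j)) s(x, y) = z := by
      rw [← hze]
      induction z with
      | _ a b => simp [Sym2.map_pair_eq, rot_rot]
    simp only [Sym2.map_pair_eq] at this
    rw [show ((rotIso (-j)) x) = rot (-j) x from rfl, show ((rotIso (-j)) y) = rot (-j) y from rfl]
    rwa [this]
  · intro hmem
    refine Finset.mem_image.mpr ⟨s(rot (-j) x, rot (-j) y), hmem, ?_⟩
    rw [Sym2.map_pair_eq, rot_rot' j x, rot_rot' j y]

theorem autSymm {S₁ S₂ : Finset (Sym2 V5)} (h : Automorphic (GP 5) S₁ S₂) :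
    Automorphic (GP 5) S₂ S₁ := by
  obtain ⟨φ, hφ⟩ := h
  refine ⟨φ.symm, fun x y hxy => ?_⟩
  have hadj : (GP 5).Adj (φ.symm x) (φ.symm y) := by
    rw [← φ.map_adj_iff]
    simpa using hxy
  have := hφ (φ.symm x) (φ.symm y) hadj
  simpa using this.symm

theorem autTrans {S₁ S₂ S₃ : Finset (Sym2 V5)} (h12 : Automorphic (GP 5) S₁ S₂)
    (h23 : Automorphic (GP 5) S₂ S₃) : Automorphic (GP 5) S₁ S₃ := by
  obtain ⟨φ, hφ⟩ := h12
  obtain ⟨ψ, hψ⟩ := h23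
  refine ⟨φ.trans ψ, fun x y hxy => ?_⟩
  have hadj : (GP 5).Adj (φ x) (φ y) := by rw [φ.map_adj_iff]; exact hxy
  exact (hφ x y hxy).trans (hψ (φ x) (φ y) hadj)

theorem autRefl (S : Finset (Sym2 V5)) : Automorphic (GP 5) S S :=
  ⟨{ toEquiv := Equiv.refl _, map_rel_iff' := Iff.rfl }, fun _ _ _ => Iff.rfl⟩
/- ### An automorphism invariant: the number of ordered pairs of "parallel" matching edges -/

def ELF : Finset (V5 × V5) := Finset.univ.filter (fun p : V5 × V5 => (GP 5).Adj p.1 p.2)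

def inv2 (M : Finset (Sym2 V5)) : ℕ :=
  ((ELF ×ˢ ELF).filter fun t =>
    s(t.1.1, t.1.2) ∈ M ∧ s(t.2.1, t.2.2) ∈ M ∧ (GP 5).Adj t.1.1 t.2.1 ∧
      (GP 5).Adj t.1.2 t.2.2 ∧ s(t.1.1, t.1.2) ≠ s(t.2.1, t.2.2)).card

theorem inv2_invariant {M₁ M₂ : Finset (Sym2 V5)} (h₁ : IsMatchingSet (GP 5) M₁)
    (h₂ : IsMatchingSet (GP 5) M₂) (h : Automorphic (GP 5) M₁ M₂) : inv2 M₁ = inv2 M₂ := by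
  obtain ⟨φ, hφ⟩ := h
  have hφ' : ∀ x y, (GP 5).Adj x y → (s(x, y) ∈ M₂ ↔ s(φ.symm x, φ.symm y) ∈ M₁) := by
    intro x y hxy
    have hadj : (GP 5).Adj (φ.symm x) (φ.symm y) := by
      rw [← φ.map_adj_iff]; simpa using hxy
    have := hφ (φ.symm x) (φ.symm y) hadj
    simpa using this.symm
  have hinj : Function.Injective (⇑φ) := φ.toEquiv.injective
  have hinj' : Function.Injective (⇑φ.symm) := φ.toEquiv.symm.injective
  unfold inv2
  refine Finset.card_bij' (fun t _ => ((φ t.1.1, φ t.1.2), (φ t.2.1, φ t.2.2)))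
    (fun t _ => ((φ.symm t.1.1, φ.symm t.1.2), (φ.symm t.2.1, φ.symm t.2.2))) ?_ ?_ ?_ ?_
  · intro t ht
    rw [Finset.mem_filter] at ht ⊢
    obtain ⟨-, hm1, hm2, ha1, ha2, hne⟩ := ht
    have he1 : (GP 5).Adj t.1.1 t.1.2 := (GP 5).mem_edgeSet.mp (h₁.1 hm1)
    have he2 : (GP 5).Adj t.2.1 t.2.2 := (GP 5).mem_edgeSet.mp (h₁.1 hm2)
    refine ⟨?_, (hφ _ _ he1).mp hm1, (hφ _ _ he2).mp hm2,
      φ.map_adj_iff.mpr ha1, φ.map_adj_iff.mpr ha2, ?_⟩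
    · rw [Finset.mem_product]
      constructor <;> · simp only [ELF, Finset.mem_filter]
                        exact ⟨Finset.mem_univ _, φ.map_adj_iff.mpr (by assumption)⟩
    · intro hcontra
      apply hne
      have h1 : Sym2.map (⇑φ) s(t.1.1, t.1.2) = Sym2.map (⇑φ) s(t.2.1, t.2.2) := by
        rw [Sym2.map_pair_eq, Sym2.map_pair_eq]; exact hcontra
      exact Sym2.map.injective hinj h1
  · intro t ht
    rw [Finset.mem_filter] at ht ⊢
    obtain ⟨-, hm1, hm2, ha1, ha2, hne⟩ := ht
    have he1 : (GP 5).Adj t.1.1 t.1.2 := (GP 5).mem_edgeSet.mp (h₂.1 hm1)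
    have he2 : (GP 5).Adj t.2.1 t.2.2 := (GP 5).mem_edgeSet.mp (h₂.1 hm2)
    have hadjs : ∀ x y : V5, (GP 5).Adj x y → (GP 5).Adj (φ.symm x) (φ.symm y) := by
      intro x y hxy
      rw [← φ.map_adj_iff]; simpa using hxy
    refine ⟨?_, (hφ' _ _ he1).mp hm1, (hφ' _ _ he2).mp hm2, hadjs _ _ ha1, hadjs _ _ ha2, ?_⟩
    · rw [Finset.mem_product]
      constructor <;> · simp only [ELF, Finset.mem_filter]
                        exact ⟨Finset.mem_univ _, hadjs _ _ (by assumption)⟩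
    · intro hcontra
      apply hne
      have h1 : Sym2.map (⇑φ.symm) s(t.1.1, t.1.2) = Sym2.map (⇑φ.symm) s(t.2.1, t.2.2) := by
        rw [Sym2.map_pair_eq, Sym2.map_pair_eq]; exact hcontra
      exact Sym2.map.injective hinj' h1
  · intro t ht; simp
  · intro t ht; simp

theorem invA : inv2 RepA = 20 := by decide +kernel
theorem invB : inv2 RepB = 12 := by decide +kernel
theorem invC : inv2 RepC = 8 := by decide +kernel

theorem repMatching : ∀ k : Fin 3, IsMatchingSet (GP 5) (Reps k) ∧ (Reps k).card = 5 := by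
  have hsub : ∀ k : Fin 3, Reps k ⊆ (GP 5).edgeFinset := by decide +kernel
  have hpair : ∀ k : Fin 3, ∀ e ∈ Reps k, ∀ f ∈ Reps k, e ≠ f → ∀ x : V5, x ∈ e → x ∉ f := by
    decide +kernel
  have hcard : ∀ k : Fin 3, (Reps k).card = 5 := by decide +kernel
  intro k
  refine ⟨⟨?_, hpair k⟩, hcard k⟩
  rw [← SimpleGraph.coe_edgeFinset]
  exact Finset.coe_subset.mpr (hsub k)
/- ### Final assembly -/

abbrev MS := {M : Finset (Sym2 V5) // IsMatchingSet (GP 5) M ∧ M.card = 5}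

def rAut : MS → MS → Prop := fun M₁ M₂ => Automorphic (GP 5) M₁.1 M₂.1

def idx (M : MS) : Fin 3 :=
  if inv2 M.1 = 20 then 0 else if inv2 M.1 = 12 then 1 else 2

theorem main_aut (M : MS) : Automorphic (GP 5) M.1 (Reps (idx M)) := by
  obtain ⟨k, j, hM⟩ := classify M.1 M.2.1 M.2.2
  have hAut : Automorphic (GP 5) M.1 (Reps k) := by rw [hM]; exact autRot k j
  have hinv : inv2 M.1 = inv2 (Reps k) := inv2_invariant M.2.1 (repMatching k).1 hAut
  have hidx : idx M = k := by
    fin_cases k <;>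
      simp_all [idx, hinv, show inv2 (Reps 0) = 20 from invA,
        show inv2 (Reps 1) = 12 from invB, show inv2 (Reps 2) = 8 from invC]
  rw [hidx]
  exact hAut

def theEquiv : Quot rAut ≃ Fin 3 where
  toFun := Quot.lift idx (fun a b hab => by
    unfold idx
    rw [inv2_invariant a.2.1 b.2.1 hab])
  invFun k := Quot.mk rAut ⟨Reps k, repMatching k⟩
  left_inv := by
    apply Quot.ind
    intro M
    simp only [Quot.lift]
    exact Quot.sound (autSymm (main_aut M))
  right_inv k := by
    show idx ⟨Reps k, repMatching k⟩ = k
    fin_cases k <;>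
      simp [idx, show inv2 (Reps 0) = 20 from invA,
        show inv2 (Reps 1) = 12 from invB, show inv2 (Reps 2) = 8 from invC]

theorem GP5_matchings_size5_orbits :
    Nat.card (Quot (fun (M₁ M₂ : {M : Finset (Sym2 (Bool × ZMod 5)) //
        IsMatchingSet (GP 5) M ∧ M.card = 5}) =>
      Automorphic (GP 5) M₁.1 M₂.1)) = 3 := by
  have := Nat.card_eq_of_equiv_fin theEquiv
  exact this
end

section
/- In the generalized Petersen graph P(7,1), consider the seven forbidden edge sets σ₁ = {u₀u₁, v₀v₁, v₂u₂}, σ₂ = {u₀u₁, v₁v₂, u₂u₃}, σ₃ = {u₀u₁, v₁v₂, v₄v₅}, σ₄ = {u₀u₁, v₀v₁, u₃u₄}, σ₅ = {u₀u₁, v₀v₆, u₃u₄}, σ₆ = {u₀v₀, u₁v₁, v₂v₃}, σ₇ = {u₀v₀, u₁v₁, u₂v₂}. If M is a matching of P(7,1) of size l ≥ 3 that contains σᵢ as a subset for some i ∈ {1,…,7}, then the signature M is switching equivalent to a signature of P(7,1) of size at most l − 1. -/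
open SimpleGraph

/-- Two signatures of `G` are switching equivalent: some switching function
`f : V → {±1}` (modelled by `Bool`) turns one into the other. -/
def SwitchEquiv {V : Type*} (G : SimpleGraph V) (S₁ S₂ : Finset (Sym2 V)) : Prop :=
  ∃ f : V → Bool, ∀ x y, G.Adj x y →
    (s(x, y) ∈ S₂ ↔ Xor' (s(x, y) ∈ S₁) (f x ≠ f y))

/-- The outer vertex `uᵢ` of `P(7,1)`. -/
def u (i : ZMod 7) : Bool × ZMod 7 := (false, i)

/-- The inner vertex `vᵢ` of `P(7,1)`. -/
def v (i : ZMod 7) : Bool × ZMod 7 := (true, i)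

instance GP7.adjDecidable : DecidableRel (GP 7).Adj := fun a b => by
  unfold GP
  rw [SimpleGraph.fromRel_adj]
  infer_instance

/-- Key lemma: if `σ ⊆ M` has 3 edges, and `D` is a cut of size 5 (cut induced by the
switching function `f`) containing `σ`, then switching `M` by `f` gives a signature of
size at most `l - 1`. -/
lemma key_switch (M σ D : Finset (Sym2 (Bool × ZMod 7))) (f : Bool × ZMod 7 → Bool) (l : ℕ)
    (hσM : σ ⊆ M) (hσD : σ ⊆ D) (hσc : σ.card = 3) (hDc : D.card = 5)
    (hDE : ∀ e ∈ D, e ∈ (GP 7).edgeSet)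
    (hcut : ∀ x y, (GP 7).Adj x y → (s(x, y) ∈ D ↔ f x ≠ f y))
    (hME : ↑M ⊆ (GP 7).edgeSet) (hcard : M.card = l) (hl : 3 ≤ l) :
    ∃ T : Finset (Sym2 (Bool × ZMod 7)), ↑T ⊆ (GP 7).edgeSet ∧
      SwitchEquiv (GP 7) M T ∧ T.card ≤ l - 1 := by
  refine ⟨(M \ D) ∪ (D \ M), ?_, ⟨f, ?_⟩, ?_⟩
  · intro e he
    simp only [Finset.coe_union, Set.mem_union, Finset.coe_sdiff, Set.mem_diff] at he
    rcases he with ⟨h, _⟩ | ⟨h, _⟩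
    exacts [hME h, hDE _ h]
  · intro x y hxy
    have hD := hcut x y hxy
    simp only [Finset.mem_union, Finset.mem_sdiff, Xor', ← hD]
    rw [xor_iff_or_and_not_and]
    tauto
  · have h1 : M \ D ⊆ M \ σ := Finset.sdiff_subset_sdiff (Finset.Subset.refl _) hσD
    have h2 : D \ M ⊆ D \ σ := Finset.sdiff_subset_sdiff (Finset.Subset.refl _) hσM
    calc ((M \ D) ∪ (D \ M)).card ≤ (M \ D).card + (D \ M).card :=
          Finset.card_union_le _ _
      _ ≤ (M \ σ).card + (D \ σ).card :=
          Nat.add_le_add (Finset.card_le_card h1) (Finset.card_le_card h2)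
      _ = (l - 3) + (5 - 3) := by
          rw [Finset.card_sdiff_of_subset hσM, Finset.card_sdiff_of_subset hσD, hσc, hDc, hcard]
      _ ≤ l - 1 := by omega

theorem GP7_forbidden_matchings (M : Finset (Sym2 (Bool × ZMod 7))) (l : ℕ)
    (hM : IsMatchingSet (GP 7) M) (hcard : M.card = l) (hl : 3 ≤ l)
    (hforb :
      ({s(u 0, u 1), s(v 0, v 1), s(v 2, u 2)} : Finset (Sym2 (Bool × ZMod 7))) ⊆ M ∨
      ({s(u 0, u 1), s(v 1, v 2), s(u 2, u 3)} : Finset (Sym2 (Bool × ZMod 7))) ⊆ M ∨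
      ({s(u 0, u 1), s(v 1, v 2), s(v 4, v 5)} : Finset (Sym2 (Bool × ZMod 7))) ⊆ M ∨
      ({s(u 0, u 1), s(v 0, v 1), s(u 3, u 4)} : Finset (Sym2 (Bool × ZMod 7))) ⊆ M ∨
      ({s(u 0, u 1), s(v 0, v 6), s(u 3, u 4)} : Finset (Sym2 (Bool × ZMod 7))) ⊆ M ∨
      ({s(u 0, v 0), s(u 1, v 1), s(v 2, v 3)} : Finset (Sym2 (Bool × ZMod 7))) ⊆ M ∨
      ({s(u 0, v 0), s(u 1, v 1), s(u 2, v 2)} : Finset (Sym2 (Bool × ZMod 7))) ⊆ M) :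
    ∃ T : Finset (Sym2 (Bool × ZMod 7)), ↑T ⊆ (GP 7).edgeSet ∧
      SwitchEquiv (GP 7) M T ∧ T.card ≤ l - 1 := by
  have hME : ↑M ⊆ (GP 7).edgeSet := hM.1
  rcases hforb with h | h | h | h | h | h | h
  · exact key_switch M _
      {s(u 0, u 1), s(v 0, v 1), s(v 1, v 2), s(u 2, u 3), s(u 2, v 2)}
      (fun p => decide (p = u 1 ∨ p = u 2 ∨ p = v 1)) l h (by decide) (by decide) (by decide)
      (by decide) (by decide) hME hcard hl
  · exact key_switch M _
      {s(u 0, u 1), s(v 0, v 1), s(v 1, v 2), s(u 2, u 3), s(u 2, v 2)}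
      (fun p => decide (p = u 1 ∨ p = u 2 ∨ p = v 1)) l h (by decide) (by decide) (by decide)
      (by decide) (by decide) hME hcard hl
  · exact key_switch M _
      {s(u 0, u 1), s(v 1, v 2), s(v 4, v 5), s(u 4, u 5), s(u 1, v 1)}
      (fun p => decide (p = u 0 ∨ p = u 5 ∨ p = u 6 ∨ p = v 0 ∨ p = v 1 ∨ p = v 5 ∨ p = v 6))
      l h (by decide) (by decide) (by decide)
      (by decide) (by decide) hME hcard hl
  · exact key_switch M _
      {s(u 0, u 1), s(v 0, v 1), s(u 3, u 4), s(u 3, v 3), s(v 2, v 3)}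
      (fun p => decide (p = u 1 ∨ p = u 2 ∨ p = u 3 ∨ p = v 1 ∨ p = v 2))
      l h (by decide) (by decide) (by decide)
      (by decide) (by decide) hME hcard hl
  · exact key_switch M _
      {s(u 0, u 1), s(v 0, v 6), s(u 3, u 4), s(v 3, v 4), s(u 0, v 0)}
      (fun p => decide (p = u 0 ∨ p = u 4 ∨ p = u 5 ∨ p = u 6 ∨ p = v 4 ∨ p = v 5 ∨ p = v 6))
      l h (by decide) (by decide) (by decide)
      (by decide) (by decide) hME hcard hl
  · exact key_switch M _
      {s(u 0, v 0), s(u 1, v 1), s(v 2, v 3), s(v 0, v 6), s(u 2, v 2)}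
      (fun p => decide (p = v 0 ∨ p = v 1 ∨ p = v 2))
      l h (by decide) (by decide) (by decide)
      (by decide) (by decide) hME hcard hl
  · exact key_switch M _
      {s(u 0, v 0), s(u 1, v 1), s(u 2, v 2), s(u 2, u 3), s(u 0, u 6)}
      (fun p => decide (p = u 0 ∨ p = u 1 ∨ p = u 2))
      l h (by decide) (by decide) (by decide)
      (by decide) (by decide) hME hcard hl
end
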